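/- arXiv:1705.01305 — 6 statements merged into one kernel-verified Lean document; each statement's English description precedes it below -/
import Mathlib

section
/- Let assumptions A1 and A2 hold. Then every optimal scoring function has the same MV curve as the density: for every s* ∈ S* and every α ∈ (0,1), MV_{s*}(α) = MV_f(α). -/
open MeasureTheory Set Filter
open scoped ENNReal Topology symmDiff

noncomputable section

/-- The probability distribution on `ℝ^d` with Lebesgue density `f`. -/
def densMeasure {d : ℕ} (f : (Fin d → ℝ) → ℝ) : Measure (Fin d → ℝ) :=
  volume.withDensity fun x => ENNReal.ofReal (f x)

/-- A scoring function: measurable, nonnegative and Lebesgue-integrable. -/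
def IsScoring {d : ℕ} (s : (Fin d → ℝ) → ℝ) : Prop :=
  Measurable s ∧ (∀ x, 0 ≤ s x) ∧ Integrable s volume

/-- The mass `α_s(t) = P(s(X) ≥ t)` of the level set `{s ≥ t}`. -/
def alphaS {d : ℕ} (μ : Measure (Fin d → ℝ)) (s : (Fin d → ℝ) → ℝ) (t : ℝ) : ℝ :=
  (μ {x | t ≤ s x}).toReal

/-- The Lebesgue volume `λ_s(t)` of the level set `{s ≥ t}`. -/
def lamS {d : ℕ} (s : (Fin d → ℝ) → ℝ) (t : ℝ) : ℝ :=
  (volume {x | t ≤ s x}).toReal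

/-- The generalized inverse `α_s⁻¹(α) = inf {t : α_s(t) ≤ α}`. -/
def alphaInv {d : ℕ} (μ : Measure (Fin d → ℝ)) (s : (Fin d → ℝ) → ℝ) (α : ℝ) : ℝ :=
  sInf {t | alphaS μ s t ≤ α}

/-- The Mass Volume curve `MV_s(α) = λ_s(α_s⁻¹(α))`. -/
def MV {d : ℕ} (μ : Measure (Fin d → ℝ)) (s : (Fin d → ℝ) → ℝ) (α : ℝ) : ℝ :=
  lamS s (alphaInv μ s α)

/-- The cumulative distribution function `F_s(t) = P(s(X) ≤ t)`. -/
def cdfS {d : ℕ} (μ : Measure (Fin d → ℝ)) (s : (Fin d → ℝ) → ℝ) (t : ℝ) : ℝ :=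
  (μ {x | s x ≤ t}).toReal

/-- The quantile function `F_s†(u) = inf {t : F_s(t) ≥ u}`. -/
def quantS {d : ℕ} (μ : Measure (Fin d → ℝ)) (s : (Fin d → ℝ) → ℝ) (u : ℝ) : ℝ :=
  sInf {t | u ≤ cdfS μ s t}

/-- The class `S*` of optimal scoring functions. -/
def IsOptimalScoring {d : ℕ} (f s : (Fin d → ℝ) → ℝ) : Prop :=
  IsScoring s ∧
  ∃ (Z : Set (Fin d → ℝ)) (T : ℝ → ℝ),
    MeasurableSet Z ∧
    (∀ y ∈ Set.range f, 0 ≤ T y) ∧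
    volume (Zᶜ ∩ {x | 0 < f x}) = 0 ∧
    (∀ x ∈ Z ∩ {x | 0 < f x}, s x = T (f x)) ∧
    StrictMonoOn T (f '' (Z ∩ {x | 0 < f x})) ∧
    volume {x | ¬ 0 < f x ∧ cdfS (densMeasure f) s (s x) ≠ 0} = 0

section AuxLemmas

variable {X : Type*} [MeasurableSpace X] (μ : Measure X) [IsFiniteMeasure μ]

lemma aux_measure_levelset_iInf {g : X → ℝ} (hg : Measurable g) (t : ℝ) :
    μ {x | t ≤ g x} = ⨅ n : ℕ, μ {x | t - 1/(n+1) ≤ g x} := by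
  have hset : {x | t ≤ g x} = ⋂ n : ℕ, {x | t - 1/(n+1) ≤ g x} := by
    ext x
    simp only [Set.mem_iInter, Set.mem_setOf_eq]
    constructor
    · intro h n
      have : (0:ℝ) < 1/(n+1) := by positivity
      linarith
    · intro h
      by_contra hlt
      push_neg at hlt
      obtain ⟨n, hn⟩ := exists_nat_one_div_lt (by linarith : (0:ℝ) < t - g x)
      have := h n
      linarith
  rw [hset]
  refine Directed.measure_iInter (fun n => ?_) ?_ ⟨0, measure_ne_top _ _⟩
  · exact (measurableSet_le measurable_const hg).nullMeasurableSet
  · refine Antitone.directed_ge fun n m hnm => ?_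
    intro x hx
    simp only [Set.mem_setOf_eq] at hx ⊢
    have h1 : (1:ℝ)/(m+1) ≤ 1/(n+1) := by
      apply one_div_le_one_div_of_le <;> [positivity; exact_mod_cast by omega]
    linarith

lemma aux_measure_levelset_iSup {g : X → ℝ} (t : ℝ) :
    μ {x | t < g x} = ⨆ n : ℕ, μ {x | t + 1/(n+1) ≤ g x} := by
  have hset : {x | t < g x} = ⋃ n : ℕ, {x | t + 1/(n+1) ≤ g x} := by
    ext x
    simp only [Set.mem_iUnion, Set.mem_setOf_eq]
    constructor
    · intro h
      obtain ⟨n, hn⟩ := exists_nat_one_div_lt (by linarith : (0:ℝ) < g x - t)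
      exact ⟨n, by linarith⟩
    · rintro ⟨n, hn⟩
      have : (0:ℝ) < 1/(n+1) := by positivity
      linarith
  rw [hset]
  refine Directed.measure_iUnion ?_
  refine Monotone.directed_le fun n m hnm => ?_
  intro x hx
  simp only [Set.mem_setOf_eq] at hx ⊢
  have h1 : (1:ℝ)/(m+1) ≤ 1/(n+1) := by
    apply one_div_le_one_div_of_le <;> [positivity; exact_mod_cast by omega]
  linarith

lemma aux_exists_small_level {g : X → ℝ} (hg : Measurable g) {c : ℝ≥0∞} (hc : 0 < c) :
    ∃ t : ℝ, μ {x | t ≤ g x} < c := by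
  have hset : (⋂ n : ℕ, {x | (n:ℝ) ≤ g x}) = ∅ := by
    ext x
    simp only [Set.mem_iInter, Set.mem_setOf_eq, Set.mem_empty_iff_false, iff_false, not_forall,
      not_le]
    obtain ⟨n, hn⟩ := exists_nat_gt (g x)
    exact ⟨n, hn⟩
  have h0 : (⨅ n : ℕ, μ {x | (n:ℝ) ≤ g x}) = 0 := by
    have hiInf := Directed.measure_iInter (μ := μ) (s := fun n : ℕ => {x | (n:ℝ) ≤ g x})
      (fun n => (measurableSet_le measurable_const hg).nullMeasurableSet)
      (Antitone.directed_ge fun n m hnm => Set.setOf_subset_setOf.2 fun x hx =>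
        le_trans (show (n:ℝ) ≤ (m:ℝ) by exact_mod_cast hnm) hx)
      ⟨0, measure_ne_top _ _⟩
    rw [hset, measure_empty] at hiInf
    exact hiInf.symm
  have : (⨅ n : ℕ, μ {x | (n:ℝ) ≤ g x}) < c := h0 ▸ hc
  obtain ⟨n, hn⟩ := iInf_lt_iff.mp this
  exact ⟨n, hn⟩

end AuxLemmas

set_option maxHeartbeats 1000000

/-- every optimal scoring function has the same MV curve as the density `f`. -/
theorem optimal_scoring_same_MV_curve {d : ℕ} (f : (Fin d → ℝ) → ℝ)
    (hf_meas : Measurable f) (hf_nonneg : ∀ x, 0 ≤ f x)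
    (hf_prob : IsProbabilityMeasure (densMeasure f))
    (hA1 : ∃ B, ∀ x, f x ≤ B)
    (hA2 : ∀ t > (0:ℝ), densMeasure f {x | f x = t} = 0)
    (s : (Fin d → ℝ) → ℝ) (hs : IsOptimalScoring f s) :
    ∀ α ∈ Ioo (0:ℝ) 1, MV (densMeasure f) s α = MV (densMeasure f) f α := by
  intro α hα
  obtain ⟨hα0, hα1⟩ := hα
  obtain ⟨⟨hs_meas, hs_nonneg, -⟩, Z, T, hZmeas, hT0, hZnull, hsT, hTmono, hcdf⟩ := hs
  set μ := densMeasure f with hμdef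
  haveI : IsProbabilityMeasure μ := hf_prob
  have hμfin : ∀ B : Set (Fin d → ℝ), μ B ≠ ∞ := fun B => measure_ne_top μ B
  have hαpos : (0:ℝ≥0∞) < ENNReal.ofReal α := ENNReal.ofReal_pos.2 hα0
  have hαlt1 : ENNReal.ofReal α < 1 := ENNReal.ofReal_lt_one.2 hα1
  have hmemS : ∀ (g : (Fin d → ℝ) → ℝ) (t : ℝ),
      alphaS μ g t ≤ α ↔ μ {x | t ≤ g x} ≤ ENNReal.ofReal α := by
    intro g t
    unfold alphaS
    exact (ENNReal.le_ofReal_iff_toReal_le (hμfin _) hα0.le).symm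
  have hmf : ∀ t : ℝ, MeasurableSet {x | t ≤ f x} :=
    fun t => measurableSet_le measurable_const hf_meas
  -- generic facts about the generalized inverse
  have hgen : ∀ g : (Fin d → ℝ) → ℝ, Measurable g → (∀ x, 0 ≤ g x) →
      (ENNReal.ofReal α ≤ μ {x | alphaInv μ g α ≤ g x}) ∧
      (μ {x | alphaInv μ g α < g x} ≤ ENNReal.ofReal α) ∧
      (∀ u, alphaInv μ g α < u → μ {x | u ≤ g x} ≤ ENNReal.ofReal α) ∧
      BddBelow {t | alphaS μ g t ≤ α} ∧ {t | alphaS μ g t ≤ α}.Nonempty := by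
    intro g hg hg0
    set Sset := {t | alphaS μ g t ≤ α} with hSset
    have hInv : alphaInv μ g α = sInf Sset := rfl
    have hne : Sset.Nonempty := by
      obtain ⟨t, ht⟩ := aux_exists_small_level μ hg hαpos
      exact ⟨t, (hmemS g t).2 ht.le⟩
    have hbdd : BddBelow Sset := by
      refine ⟨0, fun t ht => ?_⟩
      by_contra hlt
      push_neg at hlt
      have huniv : {x | t ≤ g x} = Set.univ := by
        ext x
        simp only [Set.mem_setOf_eq, Set.mem_univ, iff_true]
        exact le_trans hlt.le (hg0 x)
      have ht' : alphaS μ g t ≤ α := ht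
      rw [hmemS, huniv, measure_univ] at ht'
      exact absurd ht' (not_le.2 hαlt1)
    have hup : ∀ u, alphaInv μ g α < u → μ {x | u ≤ g x} ≤ ENNReal.ofReal α := by
      intro u hu
      rw [hInv] at hu
      obtain ⟨t, htS, htu⟩ := exists_lt_of_csInf_lt hne hu
      have htS' : alphaS μ g t ≤ α := htS
      have hmono : μ {x | u ≤ g x} ≤ μ {x | t ≤ g x} :=
        measure_mono (fun x hx => le_trans htu.le hx)
      exact hmono.trans ((hmemS g t).1 htS')
    have hlc : ENNReal.ofReal α ≤ μ {x | alphaInv μ g α ≤ g x} := by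
      rw [aux_measure_levelset_iInf μ hg]
      refine le_iInf fun n => ?_
      have hnot : alphaInv μ g α - 1/(n+1) ∉ Sset := by
        intro hmem
        have h1 := csInf_le hbdd hmem
        rw [← hInv] at h1
        have hpos : (0:ℝ) < 1/((n:ℝ)+1) := by positivity
        linarith
      have hnot' : ¬ μ {x | alphaInv μ g α - 1/(n+1) ≤ g x} ≤ ENNReal.ofReal α :=
        fun hcontra => hnot ((hmemS g _).2 hcontra)
      exact (not_le.1 hnot').le
    have hrt : μ {x | alphaInv μ g α < g x} ≤ ENNReal.ofReal α := by
      rw [aux_measure_levelset_iSup μ]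
      refine iSup_le fun n => hup _ ?_
      have hpos : (0:ℝ) < 1/((n:ℝ)+1) := by positivity
      linarith
    exact ⟨hlc, hrt, hup, hbdd, hne⟩
  obtain ⟨hs_lc, hs_rt, hs_up, hSbdd, hSne⟩ := hgen s hs_meas hs_nonneg
  obtain ⟨hf_lc, hf_rt, hf_up, hFbdd, hFne⟩ := hgen f hf_meas hf_nonneg
  set tstar := alphaInv μ s α with htstar
  set ustar := alphaInv μ f α with hustar
  -- positive mass below tstar
  have hs_below : 0 < μ {x | s x ≤ tstar} := by
    have hcompl : {x | s x ≤ tstar} = {x | tstar < s x}ᶜ := by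
      ext x
      simp [not_lt]
    rw [hcompl, measure_compl (measurableSet_lt measurable_const hs_meas) (hμfin _),
      measure_univ]
    exact tsub_pos_iff_lt.2 (lt_of_le_of_lt hs_rt hαlt1)
  -- null sets: density support
  have hmeas_of : AEMeasurable (fun x => ENNReal.ofReal (f x)) volume :=
    (ENNReal.measurable_ofReal.comp hf_meas).aemeasurable
  have hzero_iff : ∀ B : Set (Fin d → ℝ),
      μ B = 0 ↔ volume ({x | ENNReal.ofReal (f x) ≠ 0} ∩ B) = 0 := by
    intro B
    rw [hμdef]
    unfold densMeasure
    exact withDensity_apply_eq_zero' hmeas_of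
  have hsupp : μ {x | ¬ 0 < f x} = 0 := by
    rw [hzero_iff]
    have hempty : {x | ENNReal.ofReal (f x) ≠ 0} ∩ {x | ¬ 0 < f x} = ∅ := by
      ext x
      simp only [Set.mem_inter_iff, Set.mem_setOf_eq, Set.mem_empty_iff_false, iff_false]
      rintro ⟨h1, h2⟩
      exact h1 (ENNReal.ofReal_eq_zero.2 (not_lt.1 h2))
    rw [hempty, measure_empty]
  have hlamnull : ∀ B : Set (Fin d → ℝ), B ⊆ {x | 0 < f x} → μ B = 0 → volume B = 0 := by
    intro B hB h0
    rw [hzero_iff] at h0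
    refine measure_mono_null ?_ h0
    intro x hx
    refine ⟨?_, hx⟩
    simp only [Set.mem_setOf_eq, ne_eq, ENNReal.ofReal_eq_zero, not_le]
    exact hB hx
  have hac : μ ≪ (volume : Measure (Fin d → ℝ)) := by
    rw [hμdef]
    exact withDensity_absolutelyContinuous _ _
  have hZcμ : μ (Zᶜ ∩ {x | 0 < f x}) = 0 := hac hZnull
  have hA2vol : ∀ c : ℝ, 0 < c → volume {x | f x = c} = 0 := by
    intro c hc
    refine hlamnull _ ?_ (hA2 c hc)
    intro x hx
    simp only [Set.mem_setOf_eq] at hx ⊢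
    rw [hx]; exact hc
  -- ustar is positive
  have hexeps : ∃ ε : ℝ, 0 < ε ∧ ENNReal.ofReal α < μ {x | ε ≤ f x} := by
    by_contra h
    push_neg at h
    have h1 : μ {x | (0:ℝ) < f x} ≤ ENNReal.ofReal α := by
      rw [aux_measure_levelset_iSup μ 0]
      refine iSup_le fun n => ?_
      have := h (0 + 1/((n:ℝ)+1)) (by positivity)
      exact this
    have h2 : μ {x | (0:ℝ) < f x} = 1 := by
      have hcompl : {x | (0:ℝ) < f x}ᶜ = {x | ¬ 0 < f x} := by
        ext x; simp
      have := measure_add_measure_compl (μ := μ) (s := {x | (0:ℝ) < f x})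
        (measurableSet_lt measurable_const hf_meas)
      rw [hcompl, hsupp, add_zero, measure_univ] at this
      exact this
    rw [h2] at h1
    exact absurd (lt_of_le_of_lt h1 hαlt1) (lt_irrefl _)
  obtain ⟨ε, hε, hεgt⟩ := hexeps
  have hustar_pos : 0 < ustar := by
    have hεle : ε ≤ ustar := by
      rw [hustar]
      refine le_csInf hFne ?_
      intro u hu
      by_contra hlt
      push_neg at hlt
      have hmono : μ {x | ε ≤ f x} ≤ μ {x | u ≤ f x} :=
        measure_mono fun x hx => le_trans hlt.le hx
      have hu' : alphaS μ f u ≤ α := hu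
      rw [hmemS] at hu'
      exact absurd (lt_of_lt_of_le hεgt (hmono.trans hu')) (lt_irrefl _)
    linarith
  have hμ_ustar_le : μ {x | ustar ≤ f x} ≤ ENNReal.ofReal α := by
    have hsub : {x | ustar ≤ f x} ⊆ {x | ustar < f x} ∪ {x | f x = ustar} := by
      intro x hx
      have hx' : ustar ≤ f x := hx
      rcases eq_or_lt_of_le hx' with h | h
      · exact Or.inr h.symm
      · exact Or.inl h
    calc μ {x | ustar ≤ f x} ≤ μ {x | ustar < f x} + μ {x | f x = ustar} :=
          (measure_mono hsub).trans (measure_union_le _ _)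
      _ ≤ ENNReal.ofReal α + 0 := add_le_add hf_rt (le_of_eq (hA2 ustar hustar_pos))
      _ = ENNReal.ofReal α := add_zero _
  -- the core set
  have hcore : ENNReal.ofReal α ≤ μ ({x | tstar ≤ s x} ∩ (Z ∩ {x | 0 < f x})) := by
    have hsub : {x | tstar ≤ s x} ⊆
        ({x | tstar ≤ s x} ∩ (Z ∩ {x | 0 < f x})) ∪ ((Zᶜ ∩ {x | 0 < f x}) ∪ {x | ¬ 0 < f x}) := by
      intro x hx
      by_cases hpos : 0 < f x
      · by_cases hxZ : x ∈ Z
        · exact Or.inl ⟨hx, hxZ, hpos⟩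
        · exact Or.inr (Or.inl ⟨hxZ, hpos⟩)
      · exact Or.inr (Or.inr hpos)
    have h0 : μ ((Zᶜ ∩ {x | 0 < f x}) ∪ {x | ¬ 0 < f x}) = 0 := measure_union_null hZcμ hsupp
    calc ENNReal.ofReal α ≤ μ {x | tstar ≤ s x} := hs_lc
      _ ≤ μ ({x | tstar ≤ s x} ∩ (Z ∩ {x | 0 < f x})) + μ ((Zᶜ ∩ {x | 0 < f x}) ∪ {x | ¬ 0 < f x}) :=
          (measure_mono hsub).trans (measure_union_le _ _)
      _ = μ ({x | tstar ≤ s x} ∩ (Z ∩ {x | 0 < f x})) := by rw [h0, add_zero]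
  -- the set U and uT
  set A := f '' (Z ∩ {x | 0 < f x}) with hA_def
  set U := {a : ℝ | a ∈ A ∧ tstar ≤ T a} with hU_def
  have hApos : ∀ a ∈ A, 0 < a := by
    rintro a ⟨x, ⟨-, hx⟩, rfl⟩
    exact hx
  have hUne : U.Nonempty := by
    have hcorene : ({x | tstar ≤ s x} ∩ (Z ∩ {x | 0 < f x})).Nonempty := by
      refine nonempty_of_measure_ne_zero (μ := μ) ?_
      intro h
      rw [h] at hcore
      exact absurd hcore (not_le.2 hαpos)
    obtain ⟨x, hxs, hxZf⟩ := hcorene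
    refine ⟨f x, ⟨x, hxZf, rfl⟩, ?_⟩
    rw [← hsT x hxZf]
    exact hxs
  have hUbdd : BddBelow U := ⟨0, fun a ha => (hApos a ha.1).le⟩
  set uT := sInf U with huT_def
  have hcoresub : {x | tstar ≤ s x} ∩ (Z ∩ {x | 0 < f x}) ⊆ {x | uT ≤ f x} := by
    rintro x ⟨hxs, hxZf⟩
    refine csInf_le hUbdd ⟨⟨x, hxZf, rfl⟩, ?_⟩
    rw [← hsT x hxZf]
    exact hxs
  have hμ_uT_ge : ENNReal.ofReal α ≤ μ {x | uT ≤ f x} := hcore.trans (measure_mono hcoresub)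
  have hclaimA : ∀ u, uT < u → μ {x | u ≤ f x} ≤ ENNReal.ofReal α := by
    intro u hu
    obtain ⟨a, haU, halt⟩ := exists_lt_of_csInf_lt hUne hu
    have hsub : {x | u ≤ f x} ⊆ {x | tstar < s x} ∪ (Zᶜ ∩ {x | 0 < f x}) := by
      intro x hx
      have hfx : 0 < f x := (hApos a haU.1).trans (lt_of_lt_of_le halt hx)
      by_cases hxZ : x ∈ Z
      · refine Or.inl ?_
        have hmemA : f x ∈ A := ⟨x, ⟨hxZ, hfx⟩, rfl⟩
        have hTlt : T a < T (f x) := hTmono haU.1 hmemA (lt_of_lt_of_le halt hx)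
        show tstar < s x
        rw [hsT x ⟨hxZ, hfx⟩]
        exact lt_of_le_of_lt haU.2 hTlt
      · exact Or.inr ⟨hxZ, hfx⟩
    calc μ {x | u ≤ f x} ≤ μ {x | tstar < s x} + μ (Zᶜ ∩ {x | 0 < f x}) :=
          (measure_mono hsub).trans (measure_union_le _ _)
      _ = μ {x | tstar < s x} := by rw [hZcμ, add_zero]
      _ ≤ ENNReal.ofReal α := hs_rt
  have hust_le_uT : ustar ≤ uT := by
    by_contra h
    push_neg at h
    have h1 : uT < (uT + ustar)/2 := by linarith
    have h2 : (uT + ustar)/2 < ustar := by linarith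
    have hmem : (uT + ustar)/2 ∈ {t | alphaS μ f t ≤ α} := (hmemS f _).2 (hclaimA _ h1)
    have h3 : ustar ≤ (uT + ustar)/2 := by
      rw [hustar]
      exact csInf_le hFbdd hmem
    linarith
  have huT_pos : 0 < uT := hustar_pos.trans_le hust_le_uT
  -- sandwich helper
  have hvol_sandwich : ∀ P Q : Set (Fin d → ℝ), volume (P \ Q) = 0 → volume P ≤ volume Q := by
    intro P Q h
    calc volume P ≤ volume (Q ∪ (P \ Q)) := by
          refine measure_mono fun x hx => ?_
          by_cases hq : x ∈ Q
          · exact Or.inl hq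
          · exact Or.inr ⟨hx, hq⟩
      _ ≤ volume Q + volume (P \ Q) := measure_union_le _ _
      _ = volume Q := by rw [h, add_zero]
  -- volume {ustar ≤ f} = volume {uT ≤ f}
  have hsubUF : {x | uT ≤ f x} ⊆ {x | ustar ≤ f x} := fun x hx => le_trans hust_le_uT hx
  have hμD : μ ({x | ustar ≤ f x} \ {x | uT ≤ f x}) = 0 := by
    rw [measure_diff hsubUF (hmf uT).nullMeasurableSet (hμfin _)]
    exact tsub_eq_zero_of_le (hμ_ustar_le.trans hμ_uT_ge)
  have hvolD : volume ({x | ustar ≤ f x} \ {x | uT ≤ f x}) = 0 :=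
    hlamnull _ (fun x hx => lt_of_lt_of_le hustar_pos hx.1) hμD
  have hvol_eq1 : volume {x | ustar ≤ f x} = volume {x | uT ≤ f x} :=
    le_antisymm (hvol_sandwich _ _ hvolD) (measure_mono hsubUF)
  -- volume {tstar ≤ s} = volume {uT ≤ f}
  have hdiff1 : volume ({x | tstar ≤ s x} \ {x | uT ≤ f x}) = 0 := by
    refine measure_mono_null ?_ (measure_union_null hZnull hcdf)
    rintro x ⟨hxs, hxf⟩
    by_cases hpos : 0 < f x
    · by_cases hxZ : x ∈ Z
      · exact absurd (hcoresub ⟨hxs, hxZ, hpos⟩) hxf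
      · exact Or.inl ⟨hxZ, hpos⟩
    · refine Or.inr ⟨hpos, ?_⟩
      intro h0
      unfold cdfS at h0
      rw [ENNReal.toReal_eq_zero_iff] at h0
      have hμ0 : μ {y | s y ≤ s x} = 0 := h0.resolve_right (hμfin _)
      have hxs' : tstar ≤ s x := hxs
      have hμ0' : μ {y | s y ≤ tstar} = 0 :=
        measure_mono_null (fun y (hy : s y ≤ tstar) => le_trans hy hxs') hμ0
      rw [hμ0'] at hs_below
      exact lt_irrefl 0 hs_below
  have hdiff2 : volume ({x | uT ≤ f x} \ {x | tstar ≤ s x}) = 0 := by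
    refine measure_mono_null ?_ (measure_union_null hZnull (hA2vol uT huT_pos))
    rintro x ⟨hxf, hxs⟩
    have hxf' : uT ≤ f x := hxf
    have hpos : 0 < f x := huT_pos.trans_le hxf'
    by_cases hxZ : x ∈ Z
    · refine Or.inr ?_
      show f x = uT
      rcases eq_or_lt_of_le hxf' with h | h
      · exact h.symm
      · exfalso
        obtain ⟨a, haU, halt⟩ := exists_lt_of_csInf_lt hUne h
        have hmemA : f x ∈ A := ⟨x, ⟨hxZ, hpos⟩, rfl⟩
        have hTlt : T a < T (f x) := hTmono haU.1 hmemA halt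
        refine hxs ?_
        show tstar ≤ s x
        rw [hsT x ⟨hxZ, hpos⟩]
        exact haU.2.trans hTlt.le
    · exact Or.inl ⟨hxZ, hpos⟩
  have hvol_eq2 : volume {x | tstar ≤ s x} = volume {x | uT ≤ f x} :=
    le_antisymm (hvol_sandwich _ _ hdiff1) (hvol_sandwich _ _ hdiff2)
  -- conclude
  show MV μ s α = MV μ f α
  unfold MV lamS
  rw [← htstar, ← hustar, hvol_eq2, hvol_eq1]
end
end

section
/- Let assumptions A1 and A2 hold. Then for every scoring function s and every α ∈ (0,1), the pointwise excess of its MV curve over the optimal one is controlled by a symmetric difference of level sets: MV_s(α) − MV*(α) ≤ λ(Ω*_α Δ Ω_{s,Q(s,α)}), where Δ denotes the symmetric difference. -/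
open MeasureTheory Set Filter
open scoped ENNReal Topology symmDiff

noncomputable section

/-- There are thresholds with mass at most `α`, for any `α > 0`. -/
private lemma exists_alphaS_le' {d : ℕ} (μ : Measure (Fin d → ℝ)) [IsProbabilityMeasure μ]
    {g : (Fin d → ℝ) → ℝ} (hg : Measurable g) {α : ℝ} (hα : 0 < α) :
    ∃ t : ℝ, (μ {x | t ≤ g x}).toReal ≤ α := by
  have hanti : Antitone (fun n : ℕ => {x : Fin d → ℝ | (n : ℝ) ≤ g x}) := by
    intro m n hmn x hx
    have h1 : (m : ℝ) ≤ n := by exact_mod_cast hmn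
    exact le_trans h1 hx
  have hiInter : (⋂ n : ℕ, {x : Fin d → ℝ | (n : ℝ) ≤ g x}) = ∅ := by
    ext x
    simp only [mem_iInter, mem_setOf_eq, mem_empty_iff_false, iff_false, not_forall, not_le]
    obtain ⟨n, hn⟩ := exists_nat_gt (g x)
    exact ⟨n, hn⟩
  have htend := tendsto_measure_iInter_atTop (μ := μ)
    (s := fun n : ℕ => {x : Fin d → ℝ | (n : ℝ) ≤ g x})
    (fun n => (hg measurableSet_Ici).nullMeasurableSet) hanti ⟨0, measure_ne_top μ _⟩
  rw [hiInter, measure_empty] at htend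
  have htoReal : Tendsto (fun n : ℕ => (μ {x | (n : ℝ) ≤ g x}).toReal) atTop (𝓝 0) := by
    have := (ENNReal.tendsto_toReal (by simp)).comp htend
    exact this
  obtain ⟨n, hn⟩ := ((htoReal.eventually_lt_const hα)).exists
  exact ⟨n, hn.le⟩

/-- Continuity from above for the cdf at `0`. -/
private lemma tendsto_cdf_down' {d : ℕ} (μ : Measure (Fin d → ℝ)) [IsProbabilityMeasure μ]
    {g : (Fin d → ℝ) → ℝ} (hg : Measurable g) :
    Tendsto (fun n : ℕ => (μ {x | g x ≤ 1 / (n + 1)}).toReal) atTop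
      (𝓝 ((μ {x | g x ≤ 0}).toReal)) := by
  have hanti : Antitone (fun n : ℕ => {x : Fin d → ℝ | g x ≤ 1 / (n + 1)}) := by
    intro m n hmn x hx
    simp only [mem_setOf_eq] at hx ⊢
    refine le_trans hx ?_
    have h1 : (m : ℝ) ≤ n := by exact_mod_cast hmn
    have h2 : (0:ℝ) < m + 1 := by positivity
    exact one_div_le_one_div_of_le h2 (by linarith)
  have hiInter : (⋂ n : ℕ, {x : Fin d → ℝ | g x ≤ 1 / (n + 1)}) = {x | g x ≤ 0} := by
    ext x
    simp only [mem_iInter, mem_setOf_eq]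
    constructor
    · intro h
      by_contra hpos
      push_neg at hpos
      obtain ⟨n, hn⟩ := exists_nat_one_div_lt hpos
      exact absurd (h n) (by push_neg; exact hn)
    · intro h n
      have : (0:ℝ) < 1 / (n + 1) := by positivity
      linarith
  have htend := tendsto_measure_iInter_atTop (μ := μ)
    (s := fun n : ℕ => {x : Fin d → ℝ | g x ≤ 1 / (n + 1)})
    (fun n => (hg measurableSet_Iic).nullMeasurableSet) hanti ⟨0, measure_ne_top μ _⟩
  rw [hiInter] at htend
  have := (ENNReal.tendsto_toReal (measure_ne_top μ _)).comp htend
  exact this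

/-- Markov inequality: positive-level sets of an integrand with finite integral
have finite volume. -/
private lemma vol_level_ne_top' {d : ℕ} {g : (Fin d → ℝ) → ℝ} (hg : Measurable g)
    (hg0 : ∀ x, 0 ≤ g x) {c : ℝ} (hc : 0 < c)
    (hfin : ∫⁻ x, ENNReal.ofReal (g x) ∂(volume : Measure (Fin d → ℝ)) ≠ ⊤) :
    volume {x | c ≤ g x} ≠ ⊤ := by
  have h := mul_meas_ge_le_lintegral₀ (μ := (volume : Measure (Fin d → ℝ)))
    (hg.ennreal_ofReal.aemeasurable) (ENNReal.ofReal c)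
  have hset : {x : Fin d → ℝ | ENNReal.ofReal c ≤ ENNReal.ofReal (g x)} = {x | c ≤ g x} := by
    ext x
    simp [ENNReal.ofReal_le_ofReal_iff (hg0 x)]
  rw [hset] at h
  intro htop
  rw [htop, ENNReal.mul_top (by simp only [ne_eq, ENNReal.ofReal_eq_zero, not_le]; linarith)] at h
  exact hfin (top_le_iff.mp h)

/-- The mass above `t` and the mass strictly below `t` add up to one. -/
private lemma meas_ge_add_lt' {d : ℕ} (μ : Measure (Fin d → ℝ)) [IsProbabilityMeasure μ]
    {g : (Fin d → ℝ) → ℝ} (hg : Measurable g) (t : ℝ) :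
    (μ {x | t ≤ g x}).toReal + (μ {x | g x < t}).toReal = 1 := by
  have h1 : {x : Fin d → ℝ | g x < t} = {x | t ≤ g x}ᶜ := by
    ext x; simp [not_le]
  have h2 := measure_add_measure_compl (μ := μ) (s := {x | t ≤ g x}) (hg measurableSet_Ici)
  rw [measure_univ] at h2
  rw [h1, ← ENNReal.toReal_add (measure_ne_top μ _) (measure_ne_top μ _), h2, ENNReal.toReal_one]

/-- the pointwise excess of the MV curve of `s` over the optimal one is
bounded by the volume of the symmetric difference of the corresponding level sets,
`MV_s(α) − MV*(α) ≤ λ(Ω*_α Δ Ω_{s,Q(s,α)})` with `Q(s,α) = F_s†(1−α)` and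
`Ω*_α = {x : f(x) ≥ Q*(α)}`. -/
theorem MV_excess_le_symmDiff {d : ℕ} (f : (Fin d → ℝ) → ℝ)
    (hf_meas : Measurable f) (hf_nonneg : ∀ x, 0 ≤ f x)
    (hf_prob : IsProbabilityMeasure (densMeasure f))
    (hA1 : ∃ B, ∀ x, f x ≤ B)
    (hA2 : ∀ t > (0:ℝ), densMeasure f {x | f x = t} = 0)
    (s : (Fin d → ℝ) → ℝ) (hs : IsScoring s) :
    ∀ α ∈ Ioo (0:ℝ) 1,
      MV (densMeasure f) s α - MV (densMeasure f) f α ≤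
        (volume ({x | quantS (densMeasure f) f (1 - α) ≤ f x} ∆
                 {x | quantS (densMeasure f) s (1 - α) ≤ s x})).toReal := by
  obtain ⟨hs_meas, hs_nonneg, hs_int⟩ := hs
  intro α hα
  obtain ⟨hα0, hα1⟩ := hα
  haveI : IsProbabilityMeasure (densMeasure f) := hf_prob
  set μ := densMeasure f with hμdef
  -- atoms of f(X) are null
  have hatom : ∀ t : ℝ, μ {x | f x = t} = 0 := by
    intro t
    by_cases ht : 0 < t
    · exact hA2 t ht
    · push_neg at ht
      have hms : MeasurableSet {x : Fin d → ℝ | f x = t} :=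
        hf_meas (measurableSet_singleton t)
      rw [hμdef, densMeasure, withDensity_apply _ hms]
      have hz : ∀ x ∈ {x : Fin d → ℝ | f x = t}, ENNReal.ofReal (f x) = 0 := by
        intro x hx
        simp only [mem_setOf_eq] at hx
        rw [hx]
        exact ENNReal.ofReal_eq_zero.2 ht
      rw [setLIntegral_congr_fun hms hz, lintegral_zero]
  -- α_f = 1 - F_f
  have h5 : ∀ t : ℝ, alphaS μ f t = 1 - cdfS μ f t := by
    intro t
    have hlt_le : μ {x | f x < t} = μ {x | f x ≤ t} := by
      apply le_antisymm (measure_mono (Set.setOf_subset_setOf.mpr fun x hx => le_of_lt hx))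
      calc μ {x | f x ≤ t} ≤ μ ({x | f x < t} ∪ {x | f x = t}) :=
            measure_mono (fun x hx => by
              have hx' : f x ≤ t := hx
              rcases lt_or_eq_of_le hx' with h | h
              · exact Or.inl h
              · exact Or.inr h)
        _ ≤ μ {x | f x < t} + μ {x | f x = t} := measure_union_le _ _
        _ = μ {x | f x < t} := by rw [hatom t, add_zero]
    have h1 := meas_ge_add_lt' μ hf_meas t
    unfold alphaS cdfS
    rw [← hlt_le]
    unfold alphaS at h1
    linarith
  -- the optimal threshold coincides with the quantile
  have hQfTf : alphaInv μ f α = quantS μ f (1 - α) := by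
    unfold alphaInv quantS
    congr 1
    ext t
    simp only [mem_setOf_eq, h5 t]
    constructor <;> intro h <;> linarith
  -- nonemptiness / bounds for the sets defining the s-quantities
  have hne : ∃ t : ℝ, t ∈ {t : ℝ | alphaS μ s t ≤ α} := by
    obtain ⟨t, ht⟩ := exists_alphaS_le' μ hs_meas hα0
    exact ⟨t, ht⟩
  have hbdd : BddBelow {t : ℝ | 1 - α ≤ cdfS μ s t} := by
    refine ⟨0, fun t ht => ?_⟩
    simp only [mem_setOf_eq] at ht
    by_contra hneg
    push_neg at hneg
    have hemp : {x : Fin d → ℝ | s x ≤ t} = ∅ := by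
      ext x
      simp only [mem_setOf_eq, mem_empty_iff_false, iff_false, not_le]
      exact lt_of_lt_of_le hneg (hs_nonneg x)
    unfold cdfS at ht
    rw [hemp, measure_empty] at ht
    simp at ht
    linarith
  have hsub : {t : ℝ | alphaS μ s t ≤ α} ⊆ {t : ℝ | 1 - α ≤ cdfS μ s t} := by
    intro t ht
    simp only [mem_setOf_eq] at ht ⊢
    have h1 := meas_ge_add_lt' μ hs_meas t
    have h2 : (μ {x | s x < t}).toReal ≤ cdfS μ s t :=
      ENNReal.toReal_mono (measure_ne_top μ _)
        (measure_mono (Set.setOf_subset_setOf.mpr fun x hx => le_of_lt hx))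
    unfold alphaS at ht h1
    linarith
  have hSne : {t : ℝ | 1 - α ≤ cdfS μ s t}.Nonempty := by
    obtain ⟨t, ht⟩ := hne
    exact ⟨t, hsub ht⟩
  have hQsTs : quantS μ s (1 - α) ≤ alphaInv μ s α :=
    csInf_le_csInf hbdd hne hsub
  -- total integral of the density is one
  have hlint_f : ∫⁻ x, ENNReal.ofReal (f x) ∂(volume : Measure (Fin d → ℝ)) = 1 := by
    have h := measure_univ (μ := μ)
    rw [hμdef, densMeasure, withDensity_apply _ MeasurableSet.univ,
      setLIntegral_univ] at h
    exact h
  -- the optimal quantile is positive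
  have hQf_pos : 0 < quantS μ f (1 - α) := by
    have hzero : μ {x | f x ≤ 0} = 0 := by
      have heq : {x : Fin d → ℝ | f x ≤ 0} = {x | f x = 0} := by
        ext x
        simp only [mem_setOf_eq]
        exact ⟨fun h => le_antisymm h (hf_nonneg x), fun h => le_of_eq h⟩
      rw [heq]
      exact hatom 0
    have htd := tendsto_cdf_down' μ hf_meas
    rw [hzero] at htd
    simp only [ENNReal.toReal_zero] at htd
    obtain ⟨N, hN⟩ := (htd.eventually_lt_const (show (0:ℝ) < 1 - α by linarith)).exists
    have hSfne : {t : ℝ | 1 - α ≤ cdfS μ f t}.Nonempty := by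
      obtain ⟨t, ht⟩ := exists_alphaS_le' μ hf_meas hα0
      refine ⟨t, ?_⟩
      simp only [mem_setOf_eq]
      have := h5 t
      unfold alphaS at this
      linarith [this ▸ ht]
    have hlb : (1:ℝ) / (N + 1) ≤ quantS μ f (1 - α) := by
      apply le_csInf hSfne
      intro t ht
      simp only [mem_setOf_eq] at ht
      by_contra hlt
      push_neg at hlt
      have hmono : cdfS μ f t ≤ (μ {x | f x ≤ 1 / (N + 1)}).toReal :=
        ENNReal.toReal_mono (measure_ne_top μ _)
          (measure_mono (Set.setOf_subset_setOf.mpr fun x hx => le_trans hx hlt.le))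
      linarith
    have : (0:ℝ) < 1 / (N + 1) := by positivity
    linarith
  -- the optimal level set has finite volume
  have hA_fin : volume {x : Fin d → ℝ | quantS μ f (1 - α) ≤ f x} ≠ ⊤ :=
    vol_level_ne_top' hf_meas hf_nonneg hQf_pos (by rw [hlint_f]; exact ENNReal.one_ne_top)
  -- finite integral of s
  have hs_lint_fin : ∫⁻ x, ENNReal.ofReal (s x) ∂(volume : Measure (Fin d → ℝ)) ≠ ⊤ := by
    have h := hs_int.2
    rw [hasFiniteIntegral_iff_norm] at h
    have heq : ∀ x, ENNReal.ofReal ‖s x‖ = ENNReal.ofReal (s x) := by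
      intro x
      rw [Real.norm_eq_abs, abs_of_nonneg (hs_nonneg x)]
    rw [lintegral_congr heq] at h
    exact h.ne
  set A := {x : Fin d → ℝ | quantS μ f (1 - α) ≤ f x} with hA
  set B := {x : Fin d → ℝ | quantS μ s (1 - α) ≤ s x} with hB
  have hMVf : MV μ f α = (volume A).toReal := by
    unfold MV lamS
    rw [hQfTf]
  have hB'B : {x : Fin d → ℝ | alphaInv μ s α ≤ s x} ⊆ B := fun x hx =>
    le_trans hQsTs hx
  have hMVs : MV μ s α = (volume {x : Fin d → ℝ | alphaInv μ s α ≤ s x}).toReal := rfl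
  rcases eq_or_ne (volume {x : Fin d → ℝ | alphaInv μ s α ≤ s x}) ⊤ with hb' | hb'
  · rw [hMVs, hMVf, hb', ENNReal.toReal_top]
    have h1 : 0 ≤ (volume A).toReal := ENNReal.toReal_nonneg
    have h2 : 0 ≤ (volume (A ∆ B)).toReal := ENNReal.toReal_nonneg
    linarith
  · rcases eq_or_ne (volume (A ∆ B)) ⊤ with hm | hm
    · exfalso
      have hAB : volume (A \ B) ≠ ⊤ :=
        ne_top_of_le_ne_top hA_fin (measure_mono diff_subset)
      have hBA : volume (B \ A) = ⊤ := by
        by_contra h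
        have hle : volume (A ∆ B) ≤ volume (A \ B) + volume (B \ A) := by
          rw [Set.symmDiff_def]
          exact measure_union_le _ _
        rw [hm] at hle
        exact (ENNReal.add_ne_top.2 ⟨hAB, h⟩) (top_le_iff.mp hle)
      have hB_top : volume B = ⊤ :=
        top_le_iff.mp (hBA ▸ measure_mono (diff_subset (s := B) (t := A)))
      have hQs_np : quantS μ s (1 - α) ≤ 0 := by
        by_contra h
        push_neg at h
        exact (vol_level_ne_top' hs_meas hs_nonneg h hs_lint_fin) hB_top
      have hcd : ∀ n : ℕ, 1 - α ≤ (μ {x | s x ≤ 1 / (n + 1)}).toReal := by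
        intro n
        have hlt : sInf {t : ℝ | 1 - α ≤ cdfS μ s t} < 1 / (n + 1) :=
          lt_of_le_of_lt hQs_np (by positivity)
        obtain ⟨t, htS, htlt⟩ := (csInf_lt_iff hbdd hSne).mp hlt
        simp only [mem_setOf_eq] at htS
        have hmono : cdfS μ s t ≤ (μ {x | s x ≤ 1 / (n + 1)}).toReal :=
          ENNReal.toReal_mono (measure_ne_top μ _)
            (measure_mono (Set.setOf_subset_setOf.mpr fun x hx => le_trans hx htlt.le))
        linarith
      have hs0 : 1 - α ≤ (μ {x | s x ≤ 0}).toReal :=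
        ge_of_tendsto (tendsto_cdf_down' μ hs_meas) (Eventually.of_forall hcd)
      have hαs : ∀ t : ℝ, 0 < t → alphaS μ s t ≤ α := by
        intro t ht
        have h1 := meas_ge_add_lt' μ hs_meas t
        have h2 : (μ {x | s x ≤ 0}).toReal ≤ (μ {x | s x < t}).toReal :=
          ENNReal.toReal_mono (measure_ne_top μ _)
            (measure_mono (Set.setOf_subset_setOf.mpr fun x hx => lt_of_le_of_lt hx ht))
        unfold alphaS
        unfold alphaS at h1
        linarith
      have hTs_le : alphaInv μ s α ≤ 0 := by
        by_cases hbb : BddBelow {t : ℝ | alphaS μ s t ≤ α}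
        · by_contra hpos
          push_neg at hpos
          obtain ⟨n, hn⟩ := exists_nat_one_div_lt hpos
          have hle : alphaInv μ s α ≤ 1 / (n + 1) :=
            csInf_le hbb (hαs _ (by positivity))
          linarith
        · unfold alphaInv
          rw [Real.sInf_of_not_bddBelow hbb]
      have hBB' : volume B ≤ volume {x : Fin d → ℝ | alphaInv μ s α ≤ s x} :=
        measure_mono (fun x _ => (le_trans hTs_le (hs_nonneg x) : alphaInv μ s α ≤ s x))
      rw [hB_top] at hBB'
      exact hb' (top_le_iff.mp hBB')
    · have hsub2 : {x : Fin d → ℝ | alphaInv μ s α ≤ s x} ⊆ A ∪ (A ∆ B) := by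
        intro x hx
        have hxB : x ∈ B := hB'B hx
        by_cases hxA : x ∈ A
        · exact Or.inl hxA
        · exact Or.inr (Set.mem_symmDiff.mpr (Or.inr ⟨hxB, hxA⟩))
      have hle : volume {x : Fin d → ℝ | alphaInv μ s α ≤ s x} ≤
          volume A + volume (A ∆ B) :=
        le_trans (measure_mono hsub2) (measure_union_le _ _)
      have htr := ENNReal.toReal_mono (ENNReal.add_ne_top.2 ⟨hA_fin, hm⟩) hle
      rw [ENNReal.toReal_add hA_fin hm] at htr
      rw [hMVs, hMVf]
      linarith
end
end

section
/- Let assumptions A1 and A2 hold. Since f is bounded, the optimal curve MV* is defined on [0,1) (with MV*(0) = 0), and the map α ∈ [0,1) ↦ MV*(α) is convex. -/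
open MeasureTheory Set Filter
open scoped ENNReal Topology symmDiff

noncomputable section

namespace MVAux

variable {d : ℕ} {f : (Fin d → ℝ) → ℝ}

lemma msSet (hf : Measurable f) (t : ℝ) : MeasurableSet {x | t ≤ f x} :=
  measurableSet_le measurable_const hf

lemma dens_apply (hf : Measurable f) {s : Set (Fin d → ℝ)} (hs : MeasurableSet s) :
    densMeasure f s = ∫⁻ x in s, ENNReal.ofReal (f x) :=
  withDensity_apply _ hs

lemma dens_ne_top (hprob : IsProbabilityMeasure (densMeasure f)) (s : Set (Fin d → ℝ)) :
    densMeasure f s ≠ ∞ := by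
  exact (measure_lt_top _ _).ne

/-- lower bound by constant on a set where t ≤ f -/
lemma mul_vol_le (hf : Measurable f) {t : ℝ} {s : Set (Fin d → ℝ)}
    (hs : MeasurableSet s) (h : ∀ x ∈ s, t ≤ f x) :
    ENNReal.ofReal t * volume s ≤ densMeasure f s := by
  rw [dens_apply hf hs, ← setLIntegral_const s (ENNReal.ofReal t)]
  exact setLIntegral_mono (ENNReal.measurable_ofReal.comp hf) fun x hx =>
    ENNReal.ofReal_le_ofReal (h x hx)

lemma dens_le_mul_vol (hf : Measurable f) {t : ℝ} {s : Set (Fin d → ℝ)}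
    (hs : MeasurableSet s) (h : ∀ x ∈ s, f x ≤ t) :
    densMeasure f s ≤ ENNReal.ofReal t * volume s := by
  rw [dens_apply hf hs, ← setLIntegral_const s (ENNReal.ofReal t)]
  exact setLIntegral_mono measurable_const fun x hx => ENNReal.ofReal_le_ofReal (h x hx)

lemma vol_ne_top (hf : Measurable f) (hprob : IsProbabilityMeasure (densMeasure f))
    {t : ℝ} (ht : 0 < t) : volume {x | t ≤ f x} ≠ ∞ := by
  intro hvol
  have h1 : ENNReal.ofReal t * volume {x | t ≤ f x} ≤ densMeasure f {x | t ≤ f x} :=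
    mul_vol_le hf (msSet hf t) fun x hx => hx
  rw [hvol, ENNReal.mul_top (ENNReal.ofReal_pos.2 ht).ne'] at h1
  exact dens_ne_top hprob _ (top_le_iff.mp h1)


/-- Splitting: for s ≤ t, the set {s ≤ f} is the disjoint union of E = {s ≤ f < t} and {t ≤ f}. -/
lemma split_eq {s t : ℝ} (hst : s ≤ t) :
    ({x | s ≤ f x} \ {x | t ≤ f x}) ∪ {x | t ≤ f x} = {x | s ≤ f x} := by
  apply diff_union_of_subset
  intro x hx
  exact le_trans hst hx

/-- The key sandwich lemma. -/
lemma key (hf : Measurable f) (hprob : IsProbabilityMeasure (densMeasure f))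
    {s t : ℝ} (hs : 0 < s) (hst : s ≤ t) :
    s * (lamS f s - lamS f t) ≤ alphaS (densMeasure f) f s - alphaS (densMeasure f) f t ∧
    alphaS (densMeasure f) f s - alphaS (densMeasure f) f t ≤ t * (lamS f s - lamS f t) := by
  set E : Set (Fin d → ℝ) := {x | s ≤ f x} \ {x | t ≤ f x} with hE
  have hEm : MeasurableSet E := (msSet hf s).diff (msSet hf t)
  have hdisj : Disjoint E {x | t ≤ f x} := disjoint_sdiff_left
  have hvolsum : volume {x | s ≤ f x} = volume E + volume {x | t ≤ f x} := by
    rw [← measure_union hdisj (msSet hf t), split_eq hst]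
  have hdenssum : densMeasure f {x | s ≤ f x}
      = densMeasure f E + densMeasure f {x | t ≤ f x} := by
    rw [← measure_union hdisj (msSet hf t), split_eq hst]
  have hvs := vol_ne_top hf hprob hs
  have hvt := vol_ne_top hf hprob (hs.trans_le hst)
  have hvE : volume E ≠ ∞ := by
    intro h
    rw [h] at hvolsum
    simp at hvolsum
    exact hvs hvolsum
  have hlam : lamS f s - lamS f t = (volume E).toReal := by
    unfold lamS
    rw [hvolsum, ENNReal.toReal_add hvE hvt]
    ring
  have halpha : alphaS (densMeasure f) f s - alphaS (densMeasure f) f t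
      = (densMeasure f E).toReal := by
    unfold alphaS
    rw [hdenssum, ENNReal.toReal_add (dens_ne_top hprob _) (dens_ne_top hprob _)]
    ring
  have hlow : ENNReal.ofReal s * volume E ≤ densMeasure f E :=
    mul_vol_le hf hEm fun x hx => hx.1
  have hhigh : densMeasure f E ≤ ENNReal.ofReal t * volume E :=
    dens_le_mul_vol hf hEm fun x hx => (not_le.mp hx.2).le
  constructor
  · rw [hlam, halpha]
    have := ENNReal.toReal_mono (dens_ne_top hprob E) hlow
    rwa [ENNReal.toReal_mul, ENNReal.toReal_ofReal hs.le] at this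
  · rw [hlam, halpha]
    have hmul : ENNReal.ofReal t * volume E ≠ ∞ :=
      ENNReal.mul_ne_top ENNReal.ofReal_ne_top hvE
    have := ENNReal.toReal_mono hmul hhigh
    rwa [ENNReal.toReal_mul, ENNReal.toReal_ofReal (hs.le.trans hst)] at this

/-- `alphaS` is antitone. -/
lemma alphaS_anti (hprob : IsProbabilityMeasure (densMeasure f)) :
    Antitone (alphaS (densMeasure f) f) := by
  intro s t hst
  apply ENNReal.toReal_mono (dens_ne_top hprob _)
  apply measure_mono
  intro x hx
  exact le_trans hst hx


lemma dens_pos_full (hf : Measurable f) (hprob : IsProbabilityMeasure (densMeasure f)) :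
    densMeasure f {x | 0 < f x} = 1 := by
  have hcompl : densMeasure f {x | 0 < f x}ᶜ = 0 := by
    have hc : {x | 0 < f x}ᶜ = {x | f x ≤ 0} := by
      ext x; simp [not_lt]
    rw [hc, dens_apply hf (measurableSet_le hf measurable_const)]
    rw [setLIntegral_congr_fun (measurableSet_le hf measurable_const)
      (fun x hx => ?_), lintegral_zero]
    exact ENNReal.ofReal_eq_zero.2 hx
  have := measure_add_measure_compl (μ := densMeasure f) (s := {x | 0 < f x})
    (measurableSet_lt measurable_const hf)
  rw [hcompl, add_zero] at this
  rw [this]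
  exact measure_univ

/-- the monotone approximating sets -/
lemma mono_sets : Monotone (fun n : ℕ => {x | 1 / ((n:ℝ) + 1) ≤ f x}) := by
  intro n m hnm x hx
  have hx' : 1 / ((n:ℝ) + 1) ≤ f x := hx
  have hcast : (n:ℝ) ≤ m := Nat.cast_le.2 hnm
  have : 1 / ((m:ℝ) + 1) ≤ 1 / ((n:ℝ) + 1) :=
    one_div_le_one_div_of_le (by positivity) (by linarith)
  exact le_trans this hx'

lemma iUnion_sets : (⋃ n : ℕ, {x | 1 / ((n:ℝ) + 1) ≤ f x}) = {x | 0 < f x} := by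
  ext x
  simp only [mem_iUnion, mem_setOf_eq]
  constructor
  · rintro ⟨n, hn⟩
    exact lt_of_lt_of_le (by positivity) hn
  · intro hx
    obtain ⟨n, hn⟩ := exists_nat_one_div_lt hx
    exact ⟨n, hn.le⟩

lemma exists_eps (hf : Measurable f) (hprob : IsProbabilityMeasure (densMeasure f))
    {α : ℝ} (hα : α < 1) :
    ∃ ε : ℝ, 0 < ε ∧ α < alphaS (densMeasure f) f ε := by
  rcases lt_or_ge α 0 with hneg | hα0
  · exact ⟨1, one_pos, hneg.trans_le ENNReal.toReal_nonneg⟩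
  · have htend : Tendsto (fun n : ℕ => densMeasure f {x | 1 / ((n:ℝ) + 1) ≤ f x})
        atTop (nhds (densMeasure f {x | 0 < f x})) := by
      have := tendsto_measure_iUnion_atTop (μ := densMeasure f)
        (s := fun n : ℕ => {x | 1 / ((n:ℝ) + 1) ≤ f x}) (mono_sets (f := f))
      rwa [iUnion_sets (f := f)] at this
    rw [dens_pos_full hf hprob] at htend
    have hlt : ENNReal.ofReal α < 1 := by
      rw [← ENNReal.ofReal_one]
      exact ENNReal.ofReal_lt_ofReal_iff_of_nonneg hα0 |>.2 hα
    obtain ⟨n, hn⟩ := ((tendsto_order.mp htend).1 _ hlt).exists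
    refine ⟨1 / ((n:ℝ) + 1), by positivity, ?_⟩
    unfold alphaS
    exact (ENNReal.ofReal_lt_iff_lt_toReal hα0 (dens_ne_top hprob _)).1 hn

lemma S_nonempty (hprob : IsProbabilityMeasure (densMeasure f))
    (hA1 : ∃ B, ∀ x, f x ≤ B) {α : ℝ} (hα0 : 0 ≤ α) :
    {t | alphaS (densMeasure f) f t ≤ α}.Nonempty := by
  obtain ⟨B, hB⟩ := hA1
  refine ⟨max B 0 + 1, ?_⟩
  have : {x | max B 0 + 1 ≤ f x} = (∅ : Set (Fin d → ℝ)) := by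
    ext x
    simp only [mem_setOf_eq, mem_empty_iff_false, iff_false, not_le]
    have := hB x
    have := le_max_left B 0
    linarith
  simp only [alphaS, mem_setOf_eq, this, measure_empty]
  simpa using hα0

lemma S_bddBelow (hprob : IsProbabilityMeasure (densMeasure f))
    {α ε : ℝ} (hε : α < alphaS (densMeasure f) f ε) :
    ε ∈ lowerBounds {t | alphaS (densMeasure f) f t ≤ α} := by
  intro u hu
  by_contra h
  push_neg at h
  exact absurd (le_trans (alphaS_anti hprob h.le) hu) (not_le.2 hε)


lemma mono_sets2 (T : ℝ) : Monotone (fun n : ℕ => {x | T + 1 / ((n:ℝ) + 1) ≤ f x}) := by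
  intro n m hnm x hx
  have hx' : T + 1 / ((n:ℝ) + 1) ≤ f x := hx
  have hcast : (n:ℝ) ≤ m := Nat.cast_le.2 hnm
  have : 1 / ((m:ℝ) + 1) ≤ 1 / ((n:ℝ) + 1) :=
    one_div_le_one_div_of_le (by positivity) (by linarith)
  show T + 1 / ((m:ℝ) + 1) ≤ f x
  linarith

lemma iUnion_sets2 (T : ℝ) :
    (⋃ n : ℕ, {x | T + 1 / ((n:ℝ) + 1) ≤ f x}) = {x | T < f x} := by
  ext x
  simp only [mem_iUnion, mem_setOf_eq]
  constructor
  · rintro ⟨n, hn⟩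
    have : (0:ℝ) < 1 / ((n:ℝ) + 1) := by positivity
    linarith
  · intro hx
    obtain ⟨n, hn⟩ := exists_nat_one_div_lt (sub_pos.2 hx)
    exact ⟨n, by linarith⟩

lemma anti_sets3 (T : ℝ) : Antitone (fun n : ℕ => {x | T - 1 / ((n:ℝ) + 1) ≤ f x}) := by
  intro n m hnm x hx
  have hx' : T - 1 / ((m:ℝ) + 1) ≤ f x := hx
  have hcast : (n:ℝ) ≤ m := Nat.cast_le.2 hnm
  have : 1 / ((m:ℝ) + 1) ≤ 1 / ((n:ℝ) + 1) :=
    one_div_le_one_div_of_le (by positivity) (by linarith)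
  show T - 1 / ((n:ℝ) + 1) ≤ f x
  linarith

lemma iInter_sets3 (T : ℝ) :
    (⋂ n : ℕ, {x | T - 1 / ((n:ℝ) + 1) ≤ f x}) = {x | T ≤ f x} := by
  ext x
  simp only [mem_iInter, mem_setOf_eq]
  constructor
  · intro h
    by_contra hc
    push_neg at hc
    obtain ⟨n, hn⟩ := exists_nat_one_div_lt (sub_pos.2 hc)
    have := h n
    linarith
  · intro h n
    have : (0:ℝ) < 1 / ((n:ℝ) + 1) := by positivity
    linarith

/-- The central fact: for `α ∈ [0,1)`, `alphaInv` is positive and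
    `alphaS (alphaInv α) = α`. -/
lemma alphaInv_spec (hf : Measurable f) (hprob : IsProbabilityMeasure (densMeasure f))
    (hA1 : ∃ B, ∀ x, f x ≤ B)
    (hA2 : ∀ t > (0:ℝ), densMeasure f {x | f x = t} = 0)
    {α : ℝ} (hα0 : 0 ≤ α) (hα1 : α < 1) :
    0 < alphaInv (densMeasure f) f α ∧
      alphaS (densMeasure f) f (alphaInv (densMeasure f) f α) = α := by
  set S := {t | alphaS (densMeasure f) f t ≤ α} with hS
  set T := sInf S with hT
  have hTdef : alphaInv (densMeasure f) f α = T := rfl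
  have hne : S.Nonempty := S_nonempty hprob hA1 hα0
  obtain ⟨ε, hε0, hεα⟩ := exists_eps hf hprob hα1
  have hlb : ε ∈ lowerBounds S := S_bddBelow hprob hεα
  have hbdd : BddBelow S := ⟨ε, hlb⟩
  have hTpos : 0 < T := lt_of_lt_of_le hε0 (le_csInf hne hlb)
  -- upper bound
  have hub : densMeasure f {x | T ≤ f x} ≤ ENNReal.ofReal α := by
    have h1 : ∀ n : ℕ, densMeasure f {x | T + 1 / ((n:ℝ) + 1) ≤ f x} ≤ ENNReal.ofReal α := by
      intro n
      have hlt : T < T + 1 / ((n:ℝ) + 1) := by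
        have : (0:ℝ) < 1 / ((n:ℝ) + 1) := by positivity
        linarith
      obtain ⟨u, huS, hu⟩ := (csInf_lt_iff hbdd hne).1 (hT ▸ hlt)
      have hmono : densMeasure f {x | T + 1 / ((n:ℝ) + 1) ≤ f x}
          ≤ densMeasure f {x | u ≤ f x} := by
        apply measure_mono
        intro x hx
        have hx' : T + 1 / ((n:ℝ) + 1) ≤ f x := hx
        show u ≤ f x
        linarith
      refine le_trans hmono ?_
      exact (ENNReal.le_ofReal_iff_toReal_le (dens_ne_top hprob _) hα0).2 huS
    have htend : Tendsto (fun n : ℕ => densMeasure f {x | T + 1 / ((n:ℝ) + 1) ≤ f x})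
        atTop (nhds (densMeasure f {x | T < f x})) := by
      have := tendsto_measure_iUnion_atTop (μ := densMeasure f)
        (s := fun n : ℕ => {x | T + 1 / ((n:ℝ) + 1) ≤ f x}) (mono_sets2 (f := f) T)
      rwa [iUnion_sets2 (f := f) T] at this
    have hopen : densMeasure f {x | T < f x} ≤ ENNReal.ofReal α :=
      le_of_tendsto htend (Filter.Eventually.of_forall h1)
    have hsplit : densMeasure f {x | T ≤ f x}
        ≤ densMeasure f {x | T < f x} + densMeasure f {x | f x = T} := by
      refine le_trans (measure_mono ?_) (measure_union_le _ _)
      intro x hx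
      rcases lt_or_eq_of_le (show T ≤ f x from hx) with h | h
      · exact Or.inl h
      · exact Or.inr h.symm
    rw [hA2 T hTpos, add_zero] at hsplit
    exact le_trans hsplit hopen
  -- lower bound
  have hlbd : ENNReal.ofReal α ≤ densMeasure f {x | T ≤ f x} := by
    have h1 : ∀ n : ℕ, ENNReal.ofReal α ≤ densMeasure f {x | T - 1 / ((n:ℝ) + 1) ≤ f x} := by
      intro n
      have hlt : T - 1 / ((n:ℝ) + 1) < T := by
        have : (0:ℝ) < 1 / ((n:ℝ) + 1) := by positivity
        linarith
      have hnot : T - 1 / ((n:ℝ) + 1) ∉ S := notMem_of_lt_csInf (hT ▸ hlt) hbdd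
      have : α < alphaS (densMeasure f) f (T - 1 / ((n:ℝ) + 1)) := not_le.1 hnot
      exact (ENNReal.ofReal_le_iff_le_toReal (dens_ne_top hprob _)).2 this.le
    have htend : Tendsto (fun n : ℕ => densMeasure f {x | T - 1 / ((n:ℝ) + 1) ≤ f x})
        atTop (nhds (densMeasure f {x | T ≤ f x})) := by
      have := tendsto_measure_iInter_atTop (μ := densMeasure f)
        (s := fun n : ℕ => {x | T - 1 / ((n:ℝ) + 1) ≤ f x})
        (fun n => (msSet hf _).nullMeasurableSet) (anti_sets3 (f := f) T)
        ⟨0, dens_ne_top hprob _⟩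
      rwa [iInter_sets3 (f := f) T] at this
    exact ge_of_tendsto htend (Filter.Eventually.of_forall h1)
  refine ⟨hTdef ▸ hTpos, ?_⟩
  rw [hTdef]
  unfold alphaS
  rw [le_antisymm hub hlbd, ENNReal.toReal_ofReal hα0]


lemma alphaInv_anti (hf : Measurable f) (hprob : IsProbabilityMeasure (densMeasure f))
    (hA1 : ∃ B, ∀ x, f x ≤ B) {α β : ℝ} (h0 : 0 ≤ α) (hβ : β < 1) (hαβ : α ≤ β) :
    alphaInv (densMeasure f) f β ≤ alphaInv (densMeasure f) f α := by
  obtain ⟨ε, hε0, hεβ⟩ := exists_eps hf hprob hβ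
  refine csInf_le_csInf ⟨ε, S_bddBelow hprob hεβ⟩ (S_nonempty hprob hA1 h0) ?_
  intro t ht
  exact le_trans ht hαβ

end MVAux

/-- under A1 and A2, the optimal MV curve is defined on `[0,1)` with
`MV*(0) = 0` and is convex on `[0,1)`. -/
theorem optimal_MV_curve_convex {d : ℕ} (f : (Fin d → ℝ) → ℝ)
    (hf_meas : Measurable f) (hf_nonneg : ∀ x, 0 ≤ f x)
    (hf_prob : IsProbabilityMeasure (densMeasure f))
    (hA1 : ∃ B, ∀ x, f x ≤ B)
    (hA2 : ∀ t > (0:ℝ), densMeasure f {x | f x = t} = 0) :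
    MV (densMeasure f) f 0 = 0 ∧ ConvexOn ℝ (Ico (0:ℝ) 1) (MV (densMeasure f) f) := by
  open MVAux in
  constructor
  · -- MV(0) = 0
    obtain ⟨hT0pos, hT0⟩ := alphaInv_spec hf_meas hf_prob hA1 hA2 le_rfl one_pos
    set T0 := alphaInv (densMeasure f) f 0 with hT0def
    have hμ0 : densMeasure f {x | T0 ≤ f x} = 0 := by
      have := (ENNReal.toReal_eq_zero_iff _).1 hT0
      rcases this with h | h
      · exact h
      · exact absurd h (dens_ne_top hf_prob _)
    have hvol : volume {x | T0 ≤ f x} = 0 := by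
      have hle : ENNReal.ofReal T0 * volume {x | T0 ≤ f x} ≤ 0 := by
        rw [← hμ0]
        exact mul_vol_le hf_meas (msSet hf_meas T0) fun x hx => hx
      have := le_zero_iff.1 hle
      rcases mul_eq_zero.1 this with h | h
      · exact absurd h (ENNReal.ofReal_pos.2 hT0pos).ne'
      · exact h
    show lamS f T0 = 0
    unfold lamS
    rw [hvol, ENNReal.toReal_zero]
  · refine ⟨convex_Ico 0 1, ?_⟩
    -- main asymmetric helper
    have main : ∀ x ∈ Ico (0:ℝ) 1, ∀ y ∈ Ico (0:ℝ) 1, x ≤ y → ∀ a b : ℝ,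
        0 ≤ a → 0 ≤ b → a + b = 1 →
        MV (densMeasure f) f (a * x + b * y)
          ≤ a * MV (densMeasure f) f x + b * MV (densMeasure f) f y := by
      intro x hx y hy hxy a b ha hb hab
      have hab' : a = 1 - b := by linarith
      set z := a * x + b * y with hzdef
      have hzx : z - x = b * (y - x) := by rw [hzdef, hab']; ring
      have hyz : y - z = a * (y - x) := by rw [hzdef, hab']; ring
      have hxz : x ≤ z := by nlinarith [mul_nonneg hb (sub_nonneg.2 hxy)]
      have hzy : z ≤ y := by nlinarith [mul_nonneg ha (sub_nonneg.2 hxy)]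
      have hz0 : 0 ≤ z := le_trans hx.1 hxz
      have hz1 : z < 1 := lt_of_le_of_lt hzy hy.2
      obtain ⟨htxpos, htx⟩ := alphaInv_spec hf_meas hf_prob hA1 hA2 hx.1 hx.2
      obtain ⟨htypos, hty⟩ := alphaInv_spec hf_meas hf_prob hA1 hA2 hy.1 hy.2
      obtain ⟨htzpos, htz⟩ := alphaInv_spec hf_meas hf_prob hA1 hA2 hz0 hz1
      set tx := alphaInv (densMeasure f) f x
      set ty := alphaInv (densMeasure f) f y
      set tz := alphaInv (densMeasure f) f z
      have htzx : tz ≤ tx := alphaInv_anti hf_meas hf_prob hA1 hx.1 hz1 hxz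
      have htyz : ty ≤ tz := alphaInv_anti hf_meas hf_prob hA1 hz0 hy.2 hzy
      have K1 := (key hf_meas hf_prob htzpos htzx).1
      have K2 := (key hf_meas hf_prob htypos htyz).2
      rw [htz, htx] at K1
      rw [hty, htz] at K2
      -- K1 : tz * (lamS f tz - lamS f tx) ≤ z - x
      -- K2 : y - z ≤ tz * (lamS f ty - lamS f tz)
      rw [hzx] at K1
      rw [hyz] at K2
      set Lx := lamS f tx
      set Ly := lamS f ty
      set Lz := lamS f tz
      have hA := mul_le_mul_of_nonneg_left K1 ha
      have hB := mul_le_mul_of_nonneg_left K2 hb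
      have hchain : tz * (a * (Lz - Lx)) ≤ tz * (b * (Ly - Lz)) := by nlinarith [hA, hB]
      have hfin := le_of_mul_le_mul_left hchain htzpos
      have h2 : a * Lz + b * Lz = Lz := by rw [← add_mul, hab, one_mul]
      show Lz ≤ a * Lx + b * Ly
      linarith
    rintro x hx y hy a b ha hb hab
    rcases le_total x y with h | h
    · simpa [smul_eq_mul] using main x hx y hy h a b ha hb hab
    · have := main y hy x hx h b a hb ha (by linarith)
      have hcomm : b * y + a * x = a * x + b * y := by ring
      rw [hcomm] at this
      simpa [smul_eq_mul] using by linarith [this]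
end
end

section
/- Let assumptions A1 and A2 hold. Let F_f be the cumulative distribution function of the random variable f(X) and let a = sup{t : F_f(t) = 0}. If F_f is invertible on (a, F_f†(1)], then MV* is differentiable on [0,1) and, for every α ∈ [0,1), MV*'(α) = 1/Q*(α). -/
open MeasureTheory Set Filter
open scoped ENNReal Topology symmDiff

noncomputable section

variable {d : ℕ} {f : (Fin d → ℝ) → ℝ}

lemma mv5_measIci (hf : Measurable f) (t : ℝ) : MeasurableSet {x | t ≤ f x} :=
  hf measurableSet_Ici

lemma mv5_measIic (hf : Measurable f) (t : ℝ) : MeasurableSet {x | f x ≤ t} :=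
  hf measurableSet_Iic

lemma mv5_apply (hf : Measurable f) {s : Set (Fin d → ℝ)} (hs : MeasurableSet s) :
    densMeasure f s = ∫⁻ x in s, ENNReal.ofReal (f x) ∂volume :=
  withDensity_apply _ hs

lemma mv5_total (hf_prob : IsProbabilityMeasure (densMeasure f)) :
    ∫⁻ x, ENNReal.ofReal (f x) ∂volume = 1 := by
  have := hf_prob.measure_univ
  rwa [densMeasure, withDensity_apply _ MeasurableSet.univ, setLIntegral_univ] at this

/-- All level sets of `f` are null for the density measure. -/
lemma mv5_level_null (hf : Measurable f) (hnn : ∀ x, 0 ≤ f x)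
    (hA2 : ∀ t > (0:ℝ), densMeasure f {x | f x = t} = 0) (t : ℝ) :
    densMeasure f {x | f x = t} = 0 := by
  rcases lt_trichotomy t 0 with h | h | h
  · have : {x | f x = t} = ∅ := by
      ext x; simp only [mem_setOf_eq, mem_empty_iff_false, iff_false]
      intro hx; exact absurd (hx ▸ hnn x) (not_le.2 h)
    simp [this]
  · subst h
    have hs : MeasurableSet {x | f x = (0:ℝ)} := hf (measurableSet_singleton 0)
    rw [mv5_apply hf hs]
    rw [setLIntegral_congr_fun hs (fun x hx => by
      simp only [mem_setOf_eq] at hx; rw [hx])]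
    simp
  · exact hA2 t h

/-- Positive level sets of `f` are Lebesgue-null. -/
lemma mv5_vol_level_null (hf : Measurable f) (hnn : ∀ x, 0 ≤ f x)
    (hA2 : ∀ t > (0:ℝ), densMeasure f {x | f x = t} = 0) {t : ℝ} (ht : 0 < t) :
    volume {x | f x = t} = 0 := by
  have hs : MeasurableSet {x | f x = t} := hf (measurableSet_singleton t)
  have h0 := mv5_level_null hf hnn hA2 t
  rw [mv5_apply hf hs, setLIntegral_congr_fun hs (fun x hx => by
      simp only [mem_setOf_eq] at hx; rw [hx]), setLIntegral_const] at h0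
  rcases mul_eq_zero.1 h0 with h | h
  · exact absurd h (by simp [ENNReal.ofReal_eq_zero, not_le, ht])
  · exact h

/-- `μ {t ≤ f}` equals `μ {t < f}` when level sets are null. -/
lemma mv5_ge_eq_gt {μ : Measure (Fin d → ℝ)} {t : ℝ} (h0 : μ {x | f x = t} = 0) :
    μ {x | t ≤ f x} = μ {x | t < f x} := by
  refine le_antisymm ?_ (measure_mono fun x hx => show t ≤ f x from le_of_lt hx)
  have hsub : {x | t ≤ f x} ⊆ {x | t < f x} ∪ {x | f x = t} := by
    intro x hx
    have hx' : t ≤ f x := hx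
    rcases lt_or_eq_of_le hx' with h | h
    · exact Or.inl h
    · exact Or.inr h.symm
  calc μ {x | t ≤ f x} ≤ μ ({x | t < f x} ∪ {x | f x = t}) := measure_mono hsub
    _ ≤ μ {x | t < f x} + μ {x | f x = t} := measure_union_le _ _
    _ = μ {x | t < f x} := by rw [h0, add_zero]

/-- `cdfS + alphaS = 1` for the density measure. -/
lemma mv5_cdf_alpha (hf : Measurable f) (hnn : ∀ x, 0 ≤ f x)
    (hf_prob : IsProbabilityMeasure (densMeasure f))
    (hA2 : ∀ t > (0:ℝ), densMeasure f {x | f x = t} = 0) (t : ℝ) :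
    alphaS (densMeasure f) f t = 1 - cdfS (densMeasure f) f t := by
  set μ := densMeasure f
  have h1 : μ {x | f x ≤ t} + μ {x | t < f x} = 1 := by
    have hc : {x | f x ≤ t}ᶜ = {x | t < f x} := by ext x; simp [not_le]
    rw [← hc, measure_add_measure_compl (mv5_measIic hf t), measure_univ]
  have h2 : μ {x | t ≤ f x} = μ {x | t < f x} :=
    mv5_ge_eq_gt (mv5_level_null hf hnn hA2 t)
  have hfin1 : μ {x | f x ≤ t} ≠ ∞ := measure_ne_top μ _
  have hfin2 : μ {x | t < f x} ≠ ∞ := measure_ne_top μ _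
  have := congrArg ENNReal.toReal h1
  rw [ENNReal.toReal_add hfin1 hfin2, ENNReal.toReal_one] at this
  unfold alphaS cdfS
  rw [h2]
  linarith

/-- Markov: positive superlevel sets have finite volume. -/
lemma mv5_vol_fin (hf : Measurable f) (hnn : ∀ x, 0 ≤ f x)
    (hf_prob : IsProbabilityMeasure (densMeasure f)) {t : ℝ} (ht : 0 < t) :
    volume {x | t ≤ f x} ≠ ∞ := by
  have hm : ENNReal.ofReal t * volume {x | ENNReal.ofReal t ≤ ENNReal.ofReal (f x)}
      ≤ ∫⁻ x, ENNReal.ofReal (f x) ∂volume :=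
    mul_meas_ge_le_lintegral (hf.ennreal_ofReal) _
  have hset : {x | ENNReal.ofReal t ≤ ENNReal.ofReal (f x)} = {x | t ≤ f x} := by
    ext x; simp [ENNReal.ofReal_le_ofReal_iff (hnn x)]
  rw [hset, mv5_total hf_prob] at hm
  intro htop
  rw [htop, ENNReal.mul_top (by simp [ENNReal.ofReal_eq_zero, not_le, ht])] at hm
  exact absurd hm (by simp)

/-- Splitting a superlevel set at a higher level. -/
lemma mv5_split (hf : Measurable f) (μ : Measure (Fin d → ℝ)) {s t : ℝ} (hst : s ≤ t) :
    μ {x | s ≤ f x} = μ ({x | s ≤ f x ∧ f x < t}) + μ {x | t ≤ f x} := by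
  have hu : {x | s ≤ f x} = {x | s ≤ f x ∧ f x < t} ∪ {x | t ≤ f x} := by
    ext x
    simp only [mem_setOf_eq, mem_union]
    constructor
    · intro h
      rcases lt_or_ge (f x) t with h' | h'
      · exact Or.inl ⟨h, h'⟩
      · exact Or.inr h'
    · rintro (⟨h, _⟩ | h)
      · exact h
      · exact le_trans hst h
  rw [hu, measure_union ?_ (mv5_measIci hf t)]
  rw [Set.disjoint_left]
  rintro x ⟨_, hlt⟩ hge
  exact absurd (hge : t ≤ f x) (not_le.2 hlt)


lemma mv5_measA (hf : Measurable f) (s t : ℝ) :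
    MeasurableSet {x | s ≤ f x ∧ f x < t} := by
  have : {x | s ≤ f x ∧ f x < t} = {x | s ≤ f x} ∩ {x | f x < t} := rfl
  rw [this]
  exact (mv5_measIci hf s).inter (hf measurableSet_Iio)

lemma mv5_interval_lower (hf : Measurable f) {s t : ℝ} (hs : 0 ≤ s) :
    ENNReal.ofReal s * volume {x | s ≤ f x ∧ f x < t}
      ≤ densMeasure f {x | s ≤ f x ∧ f x < t} := by
  rw [mv5_apply hf (mv5_measA hf s t), ← setLIntegral_const]
  exact setLIntegral_mono' (mv5_measA hf s t)
    (fun x hx => ENNReal.ofReal_le_ofReal hx.1)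

lemma mv5_interval_upper (hf : Measurable f) (s t : ℝ) :
    densMeasure f {x | s ≤ f x ∧ f x < t}
      ≤ ENNReal.ofReal t * volume {x | s ≤ f x ∧ f x < t} := by
  rw [mv5_apply hf (mv5_measA hf s t), ← setLIntegral_const]
  exact setLIntegral_mono' (mv5_measA hf s t)
    (fun x hx => ENNReal.ofReal_le_ofReal (le_of_lt hx.2))

/-- The key sandwich inequality. -/
lemma mv5_sandwich (hf : Measurable f) (hnn : ∀ x, 0 ≤ f x)
    (hf_prob : IsProbabilityMeasure (densMeasure f)) {s t : ℝ} (hs : 0 < s) (hst : s ≤ t) :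
    s * (lamS f s - lamS f t) ≤ alphaS (densMeasure f) f s - alphaS (densMeasure f) f t ∧
    alphaS (densMeasure f) f s - alphaS (densMeasure f) f t ≤ t * (lamS f s - lamS f t) := by
  set μ := densMeasure f with hμ
  set A := {x | s ≤ f x ∧ f x < t} with hA
  have hvolfin : volume A ≠ ∞ := by
    refine ne_top_of_le_ne_top (mv5_vol_fin hf hnn hf_prob hs) (measure_mono ?_)
    exact fun x hx => hx.1
  have hvolfin2 : volume {x | t ≤ f x} ≠ ∞ :=
    mv5_vol_fin hf hnn hf_prob (lt_of_lt_of_le hs hst)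
  have hμAfin : μ A ≠ ∞ := measure_ne_top μ A
  have halpha : alphaS μ f s - alphaS μ f t = (μ A).toReal := by
    have := mv5_split hf μ hst
    unfold alphaS
    rw [this, ENNReal.toReal_add hμAfin (measure_ne_top μ _)]
    ring
  have hlam : lamS f s - lamS f t = (volume A).toReal := by
    have := mv5_split hf volume hst
    unfold lamS
    rw [this, ENNReal.toReal_add hvolfin hvolfin2]
    ring
  rw [halpha, hlam]
  constructor
  · have h1 := mv5_interval_lower hf (f := f) (t := t) hs.le
    have := ENNReal.toReal_mono hμAfin h1
    rwa [ENNReal.toReal_mul, ENNReal.toReal_ofReal hs.le] at this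
  · have h1 := mv5_interval_upper hf s t
    have h2 : ENNReal.ofReal t * volume A ≠ ∞ :=
      ENNReal.mul_ne_top ENNReal.ofReal_ne_top hvolfin
    have := ENNReal.toReal_mono h2 h1
    rwa [ENNReal.toReal_mul, ENNReal.toReal_ofReal (le_trans hs.le hst)] at this

lemma mv5_le_eq_lt {μ : Measure (Fin d → ℝ)} {t : ℝ} (h0 : μ {x | f x = t} = 0) :
    μ {x | f x ≤ t} = μ {x | f x < t} := by
  refine le_antisymm ?_ (measure_mono fun x hx => show f x ≤ t from le_of_lt hx)
  have hsub : {x | f x ≤ t} ⊆ {x | f x < t} ∪ {x | f x = t} := by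
    intro x hx
    have hx' : f x ≤ t := hx
    rcases lt_or_eq_of_le hx' with h | h
    · exact Or.inl h
    · exact Or.inr h
  calc μ {x | f x ≤ t} ≤ μ ({x | f x < t} ∪ {x | f x = t}) := measure_mono hsub
    _ ≤ μ {x | f x < t} + μ {x | f x = t} := measure_union_le _ _
    _ = μ {x | f x < t} := by rw [h0, add_zero]

lemma mv5_cdf_mono (hf_prob : IsProbabilityMeasure (densMeasure f)) :
    Monotone (cdfS (densMeasure f) f) := fun s t hst =>
  ENNReal.toReal_mono (measure_ne_top _ _)
    (measure_mono fun x hx => le_trans (show f x ≤ s from hx) hst)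

lemma mv5_cdf_nonneg (t : ℝ) : 0 ≤ cdfS (densMeasure f) f t := ENNReal.toReal_nonneg

lemma mv5_cdf_nonpos (hf : Measurable f) (hnn : ∀ x, 0 ≤ f x)
    (hf_prob : IsProbabilityMeasure (densMeasure f))
    (hA2 : ∀ t > (0:ℝ), densMeasure f {x | f x = t} = 0) {t : ℝ} (ht : t ≤ 0) :
    cdfS (densMeasure f) f t = 0 := by
  have hsub : {x | f x ≤ t} ⊆ {x | f x = 0} := by
    intro x hx
    exact le_antisymm (le_trans hx ht) (hnn x)
  have h0 : densMeasure f {x | f x ≤ t} = 0 :=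
    measure_mono_null hsub (mv5_level_null hf hnn hA2 0)
  unfold cdfS
  rw [h0, ENNReal.toReal_zero]

lemma mv5_cdf_top (hf_prob : IsProbabilityMeasure (densMeasure f))
    {B : ℝ} (hB : ∀ x, f x ≤ B) : cdfS (densMeasure f) f B = 1 := by
  have : {x | f x ≤ B} = univ := eq_univ_of_forall hB
  unfold cdfS
  rw [this, measure_univ, ENNReal.toReal_one]

lemma mv5_S_nonempty (hf_prob : IsProbabilityMeasure (densMeasure f))
    {B : ℝ} (hB : ∀ x, f x ≤ B) {u : ℝ} (hu : u ≤ 1) :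
    {t | u ≤ cdfS (densMeasure f) f t}.Nonempty :=
  ⟨B, by simp only [mem_setOf_eq, mv5_cdf_top hf_prob hB]; exact hu⟩

lemma mv5_S_bdd (hf : Measurable f) (hnn : ∀ x, 0 ≤ f x)
    (hf_prob : IsProbabilityMeasure (densMeasure f))
    (hA2 : ∀ t > (0:ℝ), densMeasure f {x | f x = t} = 0) {u : ℝ} (hu : 0 < u) :
    ∀ t ∈ {t | u ≤ cdfS (densMeasure f) f t}, (0:ℝ) ≤ t := by
  intro t ht
  by_contra h
  push_neg at h
  have := mv5_cdf_nonpos hf hnn hf_prob hA2 h.le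
  have ht' : u ≤ cdfS (densMeasure f) f t := ht
  rw [this] at ht'
  exact absurd ht' (not_le.2 hu)

/-- `F(Q(u)) = u` for `u ∈ (0,1]`. -/
lemma mv5_cdf_quant (hf : Measurable f) (hnn : ∀ x, 0 ≤ f x)
    (hf_prob : IsProbabilityMeasure (densMeasure f))
    (hA2 : ∀ t > (0:ℝ), densMeasure f {x | f x = t} = 0)
    {B : ℝ} (hB : ∀ x, f x ≤ B) {u : ℝ} (hu0 : 0 < u) (hu1 : u ≤ 1) :
    cdfS (densMeasure f) f (quantS (densMeasure f) f u) = u := by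
  set μ := densMeasure f with hμ
  set S := {t | u ≤ cdfS μ f t} with hS
  have hSne : S.Nonempty := mv5_S_nonempty hf_prob hB hu1
  have hSbdd : BddBelow S := ⟨0, mv5_S_bdd hf hnn hf_prob hA2 hu0⟩
  set q := quantS μ f u with hq
  have hqS : q = sInf S := rfl
  -- upper bound : F q ≥ u
  have hge : u ≤ cdfS μ f q := by
    have hiInter : ⋂ n : ℕ, {x | f x ≤ q + 1/(n+1)} = {x | f x ≤ q} := by
      ext x
      simp only [mem_iInter, mem_setOf_eq]
      constructor
      · intro h
        by_contra hc
        push_neg at hc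
        obtain ⟨n, hn⟩ := exists_nat_one_div_lt (sub_pos.2 hc)
        have := h n
        linarith
      · intro h n
        have : (0:ℝ) < 1/(n+1) := by positivity
        linarith
    have hanti : Antitone (fun n : ℕ => {x | f x ≤ q + 1/(n+1)}) := by
      intro n m hnm x hx
      have h1 : (1:ℝ)/(m+1) ≤ 1/(n+1) := by
        apply one_div_le_one_div_of_le
        · positivity
        · have hle : (n:ℝ) ≤ m := Nat.cast_le.2 hnm
          linarith
      have hx' : f x ≤ q + 1/(m+1) := hx
      exact le_trans hx' (by linarith)
    have hmeas := hanti.measure_iInter (μ := μ)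
      (fun n => (mv5_measIic hf _).nullMeasurableSet)
      ⟨0, measure_ne_top μ _⟩
    rw [hiInter] at hmeas
    have hlow : ∀ n : ℕ, ENNReal.ofReal u ≤ μ {x | f x ≤ q + 1/(n+1)} := by
      intro n
      have hqn : q < q + 1/(n+1) := by
        have : (0:ℝ) < 1/(n+1) := by positivity
        linarith
      obtain ⟨t, htS, htlt⟩ := (csInf_lt_iff hSbdd hSne).1 (hqS ▸ hqn)
      have : u ≤ cdfS μ f (q + 1/(n+1)) :=
        le_trans htS (mv5_cdf_mono hf_prob htlt.le)
      exact ENNReal.ofReal_le_of_le_toReal this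
    have : ENNReal.ofReal u ≤ μ {x | f x ≤ q} := by
      rw [hmeas]
      exact le_iInf hlow
    have h2 := ENNReal.toReal_mono (measure_ne_top μ _) this
    rwa [ENNReal.toReal_ofReal hu0.le] at h2
  -- lower bound : F q ≤ u
  have hle : cdfS μ f q ≤ u := by
    have hiUnion : ⋃ n : ℕ, {x | f x ≤ q - 1/(n+1)} = {x | f x < q} := by
      ext x
      simp only [mem_iUnion, mem_setOf_eq]
      constructor
      · rintro ⟨n, hn⟩
        have : (0:ℝ) < 1/(n+1) := by positivity
        linarith
      · intro h
        obtain ⟨n, hn⟩ := exists_nat_one_div_lt (sub_pos.2 h)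
        exact ⟨n, by linarith⟩
    have hmono : Monotone (fun n : ℕ => {x | f x ≤ q - 1/(n+1)}) := by
      intro n m hnm x hx
      have h1 : (1:ℝ)/(m+1) ≤ 1/(n+1) := by
        apply one_div_le_one_div_of_le
        · positivity
        · have hle : (n:ℝ) ≤ m := Nat.cast_le.2 hnm
          linarith
      have hx' : f x ≤ q - 1/(n+1) := hx
      exact le_trans hx' (by linarith)
    have hmeas := hmono.measure_iUnion (μ := μ)
    rw [hiUnion] at hmeas
    have hup : ∀ n : ℕ, μ {x | f x ≤ q - 1/(n+1)} ≤ ENNReal.ofReal u := by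
      intro n
      have hlt : q - 1/(n+1) < q := by
        have : (0:ℝ) < 1/(n+1) := by positivity
        linarith
      have hnotS : q - 1/(n+1) ∉ S := fun hmem => absurd (csInf_le hSbdd hmem) (not_le.2 (hqS ▸ hlt))
      have : cdfS μ f (q - 1/(n+1)) ≤ u := le_of_not_ge hnotS
      exact (ENNReal.le_ofReal_iff_toReal_le (measure_ne_top μ _) hu0.le).2 this
    have hlt : μ {x | f x < q} ≤ ENNReal.ofReal u := by
      rw [hmeas]
      exact iSup_le hup
    have heq : μ {x | f x ≤ q} = μ {x | f x < q} :=
      mv5_le_eq_lt (mv5_level_null hf hnn hA2 q)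
    have : μ {x | f x ≤ q} ≤ ENNReal.ofReal u := heq ▸ hlt
    calc cdfS μ f q ≤ (ENNReal.ofReal u).toReal :=
          ENNReal.toReal_mono ENNReal.ofReal_ne_top this
      _ = u := ENNReal.toReal_ofReal hu0.le
  linarith

lemma mv5_measure_lt (μ : Measure (Fin d → ℝ)) (q : ℝ) :
    μ {x | f x < q} = ⨆ n : ℕ, μ {x | f x ≤ q - 1/(n+1)} := by
  have hiUnion : ⋃ n : ℕ, {x | f x ≤ q - 1/(n+1)} = {x | f x < q} := by
    ext x
    simp only [mem_iUnion, mem_setOf_eq]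
    constructor
    · rintro ⟨n, hn⟩
      have : (0:ℝ) < 1/(n+1) := by positivity
      linarith
    · intro h
      obtain ⟨n, hn⟩ := exists_nat_one_div_lt (sub_pos.2 h)
      exact ⟨n, by linarith⟩
  have hmono : Monotone (fun n : ℕ => {x | f x ≤ q - 1/(n+1)}) := by
    intro n m hnm x hx
    have h1 : (1:ℝ)/(m+1) ≤ 1/(n+1) := by
      apply one_div_le_one_div_of_le
      · positivity
      · have hle : (n:ℝ) ≤ m := Nat.cast_le.2 hnm
        linarith
    have hx' : f x ≤ q - 1/(n+1) := hx
    exact le_trans hx' (by linarith)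
  rw [← hiUnion, hmono.measure_iUnion]

lemma mv5_quant_nonneg (hf : Measurable f) (hnn : ∀ x, 0 ≤ f x)
    (hf_prob : IsProbabilityMeasure (densMeasure f))
    (hA2 : ∀ t > (0:ℝ), densMeasure f {x | f x = t} = 0)
    {B : ℝ} (hB : ∀ x, f x ≤ B) {u : ℝ} (hu0 : 0 < u) (hu1 : u ≤ 1) :
    0 ≤ quantS (densMeasure f) f u :=
  le_csInf (mv5_S_nonempty hf_prob hB hu1) (mv5_S_bdd hf hnn hf_prob hA2 hu0)

lemma mv5_quant_pos (hf : Measurable f) (hnn : ∀ x, 0 ≤ f x)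
    (hf_prob : IsProbabilityMeasure (densMeasure f))
    (hA2 : ∀ t > (0:ℝ), densMeasure f {x | f x = t} = 0)
    {B : ℝ} (hB : ∀ x, f x ≤ B) {u : ℝ} (hu0 : 0 < u) (hu1 : u ≤ 1) :
    0 < quantS (densMeasure f) f u := by
  rcases lt_or_eq_of_le (mv5_quant_nonneg hf hnn hf_prob hA2 hB hu0 hu1) with h | h
  · exact h
  · exfalso
    have h1 := mv5_cdf_quant hf hnn hf_prob hA2 hB hu0 hu1
    rw [← h, mv5_cdf_nonpos hf hnn hf_prob hA2 le_rfl] at h1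
    exact absurd h1.symm (ne_of_gt hu0)

lemma mv5_quant_mono (hf : Measurable f) (hnn : ∀ x, 0 ≤ f x)
    (hf_prob : IsProbabilityMeasure (densMeasure f))
    (hA2 : ∀ t > (0:ℝ), densMeasure f {x | f x = t} = 0)
    {B : ℝ} (hB : ∀ x, f x ≤ B) {u v : ℝ} (hu0 : 0 < u) (huv : u ≤ v) (hv1 : v ≤ 1) :
    quantS (densMeasure f) f u ≤ quantS (densMeasure f) f v := by
  apply csInf_le_csInf ⟨0, mv5_S_bdd hf hnn hf_prob hA2 hu0⟩
    (mv5_S_nonempty hf_prob hB hv1)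
  intro t ht
  exact le_trans huv ht

lemma mv5_cdf_lt_of_lt_quant (hf_prob : IsProbabilityMeasure (densMeasure f))
    {u t : ℝ} (hbdd : BddBelow {t | u ≤ cdfS (densMeasure f) f t})
    (ht : t < quantS (densMeasure f) f u) :
    cdfS (densMeasure f) f t < u := by
  by_contra h
  push_neg at h
  exact absurd (csInf_le hbdd h) (not_le.2 ht)

/-- Facts about `a = sSup {t | F t = 0}`. -/
lemma mv5_cdf_a_eq_zero (hf : Measurable f) (hnn : ∀ x, 0 ≤ f x)
    (hf_prob : IsProbabilityMeasure (densMeasure f))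
    (hA2 : ∀ t > (0:ℝ), densMeasure f {x | f x = t} = 0)
    {B : ℝ} (hB : ∀ x, f x ≤ B) :
    cdfS (densMeasure f) f (sSup {t | cdfS (densMeasure f) f t = 0}) = 0 := by
  set μ := densMeasure f with hμ
  set Z := {t | cdfS μ f t = 0} with hZ
  have hZne : Z.Nonempty := ⟨0, mv5_cdf_nonpos hf hnn hf_prob hA2 le_rfl⟩
  have hZbdd : BddAbove Z := by
    refine ⟨B, fun t ht => ?_⟩
    by_contra h
    push_neg at h
    have h1 : (1:ℝ) ≤ cdfS μ f t := by
      rw [← mv5_cdf_top hf_prob hB]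
      exact mv5_cdf_mono hf_prob h.le
    have ht' : cdfS μ f t = 0 := ht
    linarith
  set a := sSup Z with ha
  have hlt : μ {x | f x < a} = 0 := by
    rw [mv5_measure_lt μ a]
    refine le_antisymm (iSup_le fun n => le_of_eq ?_) (zero_le)
    have hlt2 : a - 1/(n+1) < a := by
      have : (0:ℝ) < 1/(n+1) := by positivity
      linarith
    obtain ⟨z, hzZ, hz⟩ := exists_lt_of_lt_csSup hZne hlt2
    have h1 : cdfS μ f (a - 1/(n+1)) ≤ 0 := by
      have := mv5_cdf_mono hf_prob hz.le
      have hz' : cdfS μ f z = 0 := hzZ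
      linarith
    have h2 : cdfS μ f (a - 1/(n+1)) = 0 := le_antisymm h1 (mv5_cdf_nonneg _)
    unfold cdfS at h2
    rcases (ENNReal.toReal_eq_zero_iff _).1 h2 with h | h
    · exact h
    · exact absurd h (measure_ne_top μ _)
  have heq : μ {x | f x ≤ a} = μ {x | f x < a} :=
    mv5_le_eq_lt (mv5_level_null hf hnn hA2 a)
  unfold cdfS
  rw [heq, hlt, ENNReal.toReal_zero]

lemma mv5_cdf_pos_of_gt_a (hf : Measurable f) (hnn : ∀ x, 0 ≤ f x)
    (hf_prob : IsProbabilityMeasure (densMeasure f))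
    (hA2 : ∀ t > (0:ℝ), densMeasure f {x | f x = t} = 0)
    {B : ℝ} (hB : ∀ x, f x ≤ B) {t : ℝ}
    (ht : sSup {t | cdfS (densMeasure f) f t = 0} < t) :
    0 < cdfS (densMeasure f) f t := by
  set Z := {t | cdfS (densMeasure f) f t = 0} with hZ
  have hZbdd : BddAbove Z := by
    refine ⟨B, fun s hs => ?_⟩
    by_contra h
    push_neg at h
    have h1 : (1:ℝ) ≤ cdfS (densMeasure f) f s := by
      rw [← mv5_cdf_top hf_prob hB]
      exact mv5_cdf_mono hf_prob h.le
    have hs' : cdfS (densMeasure f) f s = 0 := hs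
    linarith
  rcases lt_or_eq_of_le (mv5_cdf_nonneg t (f := f)) with h | h
  · exact h
  · exact absurd (le_csSup hZbdd h.symm) (not_le.2 ht)

lemma mv5_alphaInv_eq (hf : Measurable f) (hnn : ∀ x, 0 ≤ f x)
    (hf_prob : IsProbabilityMeasure (densMeasure f))
    (hA2 : ∀ t > (0:ℝ), densMeasure f {x | f x = t} = 0) (α : ℝ) :
    alphaInv (densMeasure f) f α = quantS (densMeasure f) f (1 - α) := by
  unfold alphaInv quantS
  congr 1
  ext t
  rw [mem_setOf_eq, mem_setOf_eq, mv5_cdf_alpha hf hnn hf_prob hA2 t]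
  constructor <;> intro h <;> linarith

lemma mv5_MV_eq (hf : Measurable f) (hnn : ∀ x, 0 ≤ f x)
    (hf_prob : IsProbabilityMeasure (densMeasure f))
    (hA2 : ∀ t > (0:ℝ), densMeasure f {x | f x = t} = 0) (α : ℝ) :
    MV (densMeasure f) f α = lamS f (quantS (densMeasure f) f (1 - α)) := by
  unfold MV
  rw [mv5_alphaInv_eq hf hnn hf_prob hA2]

lemma mv5_quant_gt_a (hf : Measurable f) (hnn : ∀ x, 0 ≤ f x)
    (hf_prob : IsProbabilityMeasure (densMeasure f))
    (hA2 : ∀ t > (0:ℝ), densMeasure f {x | f x = t} = 0)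
    {B : ℝ} (hB : ∀ x, f x ≤ B) {u : ℝ} (hu0 : 0 < u) (hu1 : u ≤ 1) :
    sSup {t | cdfS (densMeasure f) f t = 0} < quantS (densMeasure f) f u := by
  by_contra h
  push_neg at h
  have h1 : cdfS (densMeasure f) f (quantS (densMeasure f) f u)
      ≤ cdfS (densMeasure f) f (sSup {t | cdfS (densMeasure f) f t = 0}) :=
    mv5_cdf_mono hf_prob h
  rw [mv5_cdf_a_eq_zero hf hnn hf_prob hA2 hB,
    mv5_cdf_quant hf hnn hf_prob hA2 hB hu0 hu1] at h1
  linarith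

/-- Continuity of `β ↦ Q(1-β)` within `[0,1)`. -/
lemma mv5_quant_cont (hf : Measurable f) (hnn : ∀ x, 0 ≤ f x)
    (hf_prob : IsProbabilityMeasure (densMeasure f))
    (hA2 : ∀ t > (0:ℝ), densMeasure f {x | f x = t} = 0)
    {B : ℝ} (hB : ∀ x, f x ≤ B)
    (hinv : InjOn (cdfS (densMeasure f) f)
      (Ioc (sSup {t | cdfS (densMeasure f) f t = 0}) (quantS (densMeasure f) f 1)))
    {α : ℝ} (hα : α ∈ Ico (0:ℝ) 1) :
    Tendsto (fun β => quantS (densMeasure f) f (1 - β)) (𝓝[Ico (0:ℝ) 1] α)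
      (𝓝 (quantS (densMeasure f) f (1 - α))) := by
  set μ := densMeasure f with hμ
  set a := sSup {t | cdfS μ f t = 0} with ha
  set T := quantS μ f 1 with hT
  set t₀ := quantS μ f (1 - α) with ht₀
  have hu0 : (0:ℝ) < 1 - α := by linarith [hα.2]
  have hu1 : 1 - α ≤ 1 := by linarith [hα.1]
  have hstrict : StrictMonoOn (cdfS μ f) (Ioc a T) := fun x hx y hy hxy =>
    lt_of_le_of_ne (mv5_cdf_mono hf_prob hxy.le) fun h => (ne_of_lt hxy) (hinv hx hy h)
  have ht₀a : a < t₀ := mv5_quant_gt_a hf hnn hf_prob hA2 hB hu0 hu1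
  have ht₀T : t₀ ≤ T := mv5_quant_mono hf hnn hf_prob hA2 hB hu0 hu1 le_rfl
  have hFt₀ : cdfS μ f t₀ = 1 - α := mv5_cdf_quant hf hnn hf_prob hA2 hB hu0 hu1
  rw [Metric.tendsto_nhdsWithin_nhds]
  intro ε hε
  -- lower bound point t₂
  set t₂ := max (t₀ - ε/2) ((a + t₀)/2) with ht₂
  have ht₂a : a < t₂ := lt_max_of_lt_right (by linarith)
  have ht₂lt : t₂ < t₀ := max_lt (by linarith) (by linarith)
  have hFt₂ : cdfS μ f t₂ < 1 - α := by
    rw [← hFt₀]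
    exact hstrict ⟨ht₂a, le_trans ht₂lt.le ht₀T⟩ ⟨ht₀a, ht₀T⟩ ht₂lt
  -- upper bound point t₁ (only when t₀ < T)
  rcases lt_or_eq_of_le ht₀T with hcase | hcase
  · set t₁ := min (t₀ + ε/2) T with ht₁
    have ht₁gt : t₀ < t₁ := lt_min (by linarith) hcase
    have ht₁T : t₁ ≤ T := min_le_right _ _
    have hFt₁ : 1 - α < cdfS μ f t₁ := by
      rw [← hFt₀]
      exact hstrict ⟨ht₀a, ht₀T⟩ ⟨lt_trans ht₀a ht₁gt, ht₁T⟩ ht₁gt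
    refine ⟨min (cdfS μ f t₁ - (1 - α)) ((1 - α) - cdfS μ f t₂),
      lt_min (by linarith) (by linarith), ?_⟩
    intro β hβ hd
    rw [Real.dist_eq] at hd ⊢
    have habs := abs_lt.1 hd
    have hβ1 : (0:ℝ) < 1 - β := by linarith [hβ.2]
    have hβle : 1 - β ≤ 1 := by linarith [hβ.1]
    have hup : quantS μ f (1 - β) ≤ t₁ := by
      apply csInf_le ⟨0, mv5_S_bdd hf hnn hf_prob hA2 hβ1⟩
      have : 1 - β ≤ cdfS μ f t₁ := by
        linarith [(abs_lt.1 hd).1,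
          min_le_left (cdfS μ f t₁ - (1 - α)) ((1 - α) - cdfS μ f t₂)]
      exact this
    have hlow : t₂ ≤ quantS μ f (1 - β) := by
      apply le_csInf (mv5_S_nonempty hf_prob hB hβle)
      intro s hs
      by_contra hc
      push_neg at hc
      have h1 : cdfS μ f s ≤ cdfS μ f t₂ := mv5_cdf_mono hf_prob hc.le
      have h2 : 1 - β ≤ cdfS μ f s := hs
      have h3 : cdfS μ f t₂ < 1 - β := by
        linarith [(abs_lt.1 hd).2,
          min_le_right (cdfS μ f t₁ - (1 - α)) ((1 - α) - cdfS μ f t₂)]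
      linarith
    rw [abs_lt]
    constructor
    · have : t₀ - ε/2 ≤ t₂ := le_max_left _ _
      linarith
    · have : t₁ ≤ t₀ + ε/2 := min_le_left _ _
      linarith
  · -- t₀ = T : quantile is always ≤ t₀
    refine ⟨(1 - α) - cdfS μ f t₂, by linarith, ?_⟩
    intro β hβ hd
    rw [Real.dist_eq] at hd ⊢
    have hβ1 : (0:ℝ) < 1 - β := by linarith [hβ.2]
    have hβle : 1 - β ≤ 1 := by linarith [hβ.1]
    have hup : quantS μ f (1 - β) ≤ t₀ := by
      rw [hcase]
      exact mv5_quant_mono hf hnn hf_prob hA2 hB hβ1 hβle le_rfl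
    have hlow : t₂ ≤ quantS μ f (1 - β) := by
      apply le_csInf (mv5_S_nonempty hf_prob hB hβle)
      intro s hs
      by_contra hc
      push_neg at hc
      have h1 : cdfS μ f s ≤ cdfS μ f t₂ := mv5_cdf_mono hf_prob hc.le
      have h2 : 1 - β ≤ cdfS μ f s := hs
      have h3 : cdfS μ f t₂ < 1 - β := by linarith [abs_lt.1 hd]
      linarith
    rw [abs_lt]
    constructor
    · have : t₀ - ε/2 ≤ t₂ := le_max_left _ _
      linarith
    · linarith


/-- if `F_f` is invertible on `(a, F_f†(1)]` where `a = sup {t : F_f(t) = 0}`,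
then `MV*` is differentiable on `[0,1)` with derivative `1/Q*(α)`, `Q*(α) = F_f†(1−α)`. -/
theorem optimal_MV_curve_derivative {d : ℕ} (f : (Fin d → ℝ) → ℝ)
    (hf_meas : Measurable f) (hf_nonneg : ∀ x, 0 ≤ f x)
    (hf_prob : IsProbabilityMeasure (densMeasure f))
    (hA1 : ∃ B, ∀ x, f x ≤ B)
    (hA2 : ∀ t > (0:ℝ), densMeasure f {x | f x = t} = 0)
    (hinv : InjOn (cdfS (densMeasure f) f)
      (Ioc (sSup {t | cdfS (densMeasure f) f t = 0}) (quantS (densMeasure f) f 1))) :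
    ∀ α ∈ Ico (0:ℝ) 1,
      HasDerivWithinAt (MV (densMeasure f) f)
        (1 / quantS (densMeasure f) f (1 - α)) (Ico (0:ℝ) 1) α := by
  intro α hα
  obtain ⟨B, hB⟩ := hA1
  set μ := densMeasure f with hμ
  have hu0 : (0:ℝ) < 1 - α := by linarith [hα.2]
  have hu1 : (1:ℝ) - α ≤ 1 := by linarith [hα.1]
  set t₀ := quantS μ f (1 - α) with ht₀
  have ht₀pos : 0 < t₀ := mv5_quant_pos hf_meas hf_nonneg hf_prob hA2 hB hu0 hu1
  have hgpos : ∀ β ∈ Ico (0:ℝ) 1, 0 < quantS μ f (1 - β) := fun β hβ =>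
    mv5_quant_pos hf_meas hf_nonneg hf_prob hA2 hB (by linarith [hβ.2]) (by linarith [hβ.1])
  have halpha : ∀ β ∈ Ico (0:ℝ) 1, alphaS μ f (quantS μ f (1 - β)) = β := by
    intro β hβ
    rw [mv5_cdf_alpha hf_meas hf_nonneg hf_prob hA2,
      mv5_cdf_quant hf_meas hf_nonneg hf_prob hA2 hB (by linarith [hβ.2]) (by linarith [hβ.1])]
    ring
  have hMV : ∀ β, MV μ f β = lamS f (quantS μ f (1 - β)) :=
    mv5_MV_eq hf_meas hf_nonneg hf_prob hA2
  rw [hasDerivWithinAt_iff_tendsto_slope]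
  have hgcont : Tendsto (fun β => quantS μ f (1 - β)) (𝓝[Ico (0:ℝ) 1 \ {α}] α) (𝓝 t₀) :=
    (mv5_quant_cont hf_meas hf_nonneg hf_prob hA2 hB hinv hα).mono_left
      (nhdsWithin_mono α diff_subset)
  have hbound : ∀ β ∈ Ico (0:ℝ) 1 \ {α},
      dist (slope (MV μ f) α β) (1 / t₀) ≤ dist (1 / quantS μ f (1 - β)) (1 / t₀) := by
    rintro β ⟨hβI, hβne⟩
    have hβα : β ≠ α := hβne
    set tβ := quantS μ f (1 - β) with htβ
    have htβpos : 0 < tβ := hgpos β hβI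
    have hA0 : alphaS μ f t₀ = α := halpha α hα
    have hAβ : alphaS μ f tβ = β := halpha β hβI
    rw [slope_def_field, hMV, hMV, Real.dist_eq, Real.dist_eq]
    rcases lt_or_gt_of_ne hβα with hlt | hgt
    · -- β < α, so t₀ ≤ tβ
      have httle : t₀ ≤ tβ :=
        mv5_quant_mono hf_meas hf_nonneg hf_prob hA2 hB hu0 (by linarith)
          (by linarith [hβI.1])
      obtain ⟨hS1, hS2⟩ := mv5_sandwich hf_meas hf_nonneg hf_prob ht₀pos httle
      rw [hA0, hAβ] at hS1 hS2
      -- hS1 : t₀ * (lamS f t₀ - lamS f tβ) ≤ α - β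
      -- hS2 : α - β ≤ tβ * (lamS f t₀ - lamS f tβ)
      have hne1 : β - α ≠ 0 := by intro h; apply hβα; linarith
      have hne2 : α - β ≠ 0 := by intro h; apply hβα; linarith
      have heq : (lamS f tβ - lamS f t₀) / (β - α)
          = (lamS f t₀ - lamS f tβ) / (α - β) := by
        field_simp
        ring
      rw [heq]
      have hαβpos : 0 < α - β := by linarith
      have hub : (lamS f t₀ - lamS f tβ) / (α - β) ≤ 1 / t₀ := by
        rw [div_le_div_iff₀ hαβpos ht₀pos]
        nlinarith
      have hlb : 1 / tβ ≤ (lamS f t₀ - lamS f tβ) / (α - β) := by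
        rw [div_le_div_iff₀ htβpos hαβpos]
        nlinarith
      have hinvle : 1 / tβ ≤ 1 / t₀ := one_div_le_one_div_of_le ht₀pos httle
      rw [abs_of_nonpos (by linarith), abs_of_nonpos (by linarith)]
      linarith
    · -- α < β, so tβ ≤ t₀
      have httle : tβ ≤ t₀ :=
        mv5_quant_mono hf_meas hf_nonneg hf_prob hA2 hB (by linarith [hβI.2])
          (by linarith) hu1
      obtain ⟨hS1, hS2⟩ := mv5_sandwich hf_meas hf_nonneg hf_prob htβpos httle
      rw [hA0, hAβ] at hS1 hS2
      -- hS1 : tβ * (lamS f tβ - lamS f t₀) ≤ β - α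
      -- hS2 : β - α ≤ t₀ * (lamS f tβ - lamS f t₀)
      have hβαpos : 0 < β - α := by linarith
      have hlb : 1 / t₀ ≤ (lamS f tβ - lamS f t₀) / (β - α) := by
        rw [div_le_div_iff₀ ht₀pos hβαpos]
        nlinarith
      have hub : (lamS f tβ - lamS f t₀) / (β - α) ≤ 1 / tβ := by
        rw [div_le_div_iff₀ hβαpos htβpos]
        nlinarith
      have hinvle : 1 / t₀ ≤ 1 / tβ := one_div_le_one_div_of_le htβpos httle
      rw [abs_of_nonneg (by linarith), abs_of_nonneg (by linarith)]
      linarith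
  rw [tendsto_iff_dist_tendsto_zero]
  have hb0 : Tendsto (fun β => dist (1 / quantS μ f (1 - β)) (1 / t₀))
      (𝓝[Ico (0:ℝ) 1 \ {α}] α) (𝓝 0) := by
    have h1 : Tendsto (fun β => 1 / quantS μ f (1 - β)) (𝓝[Ico (0:ℝ) 1 \ {α}] α)
        (𝓝 (1 / t₀)) := tendsto_const_nhds.div hgcont ht₀pos.ne'
    have h2 := h1.dist (tendsto_const_nhds (x := 1 / t₀))
    simpa using h2
  apply squeeze_zero' (Eventually.of_forall fun _ => dist_nonneg) ?_ hb0
  filter_upwards [self_mem_nhdsWithin] with β hβ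
  exact hbound β hβ
end
end

section
/- Let f be a probability density on ℝ^d (with respect to Lebesgue measure λ) satisfying assumption A2, let F_f be the cumulative distribution function of f(X) where X has density f, and let supp(f) = {x : f(x) > 0} and Z_f = {x : F_f(f(x)) > 0}. Then λ(supp(f) Δ Z_f) = 0, i.e. the support of the density equals {x : F_f(f(x)) > 0} up to a set of Lebesgue measure zero. -/
open MeasureTheory Set Filter
open scoped ENNReal Topology symmDiff

noncomputable section

/-- the support of the density coincides with `{x : F_f(f(x)) > 0}` up to a
Lebesgue-null set. -/
theorem support_symmDiff_Zf_null {d : ℕ} (f : (Fin d → ℝ) → ℝ)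
    (hf_meas : Measurable f) (hf_nonneg : ∀ x, 0 ≤ f x)
    (hf_prob : IsProbabilityMeasure (densMeasure f))
    (hA2 : ∀ t > (0:ℝ), densMeasure f {x | f x = t} = 0) :
    volume ({x | 0 < f x} ∆ {x | 0 < cdfS (densMeasure f) f (f x)}) = 0 := by
  haveI := hf_prob
  set μ := densMeasure f with hμ
  have hofReal : Measurable fun x => ENNReal.ofReal (f x) :=
    ENNReal.measurable_ofReal.comp hf_meas
  have hset : {x : Fin d → ℝ | ENNReal.ofReal (f x) ≠ 0} = {x | 0 < f x} := by
    ext x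
    simp [ENNReal.ofReal_eq_zero, not_le]
  have hzero : ∀ s : Set (Fin d → ℝ), μ s = 0 ↔ volume ({x | 0 < f x} ∩ s) = 0 := by
    intro s
    rw [hμ]
    show (volume.withDensity fun x => ENNReal.ofReal (f x)) s = 0 ↔ _
    rw [withDensity_apply_eq_zero hofReal, hset]
  -- cdf at 0 vanishes
  have hcdf0 : cdfS μ f 0 = 0 := by
    have h0 : μ {x | f x ≤ 0} = 0 := by
      rw [hzero]
      have : {x | 0 < f x} ∩ {x | f x ≤ 0} = (∅ : Set (Fin d → ℝ)) := by
        ext x; simp only [mem_inter_iff, mem_setOf_eq, mem_empty_iff_false, iff_false]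
        rintro ⟨h1, h2⟩; linarith
      rw [this, measure_empty]
    simp [cdfS, h0]
  have hBA : {x | 0 < cdfS μ f (f x)} ⊆ {x | 0 < f x} := by
    intro x hx
    by_contra h
    simp only [mem_setOf_eq, not_lt] at h
    have hfx : f x = 0 := le_antisymm h (hf_nonneg x)
    rw [mem_setOf_eq, hfx, hcdf0] at hx
    exact lt_irrefl _ hx
  rw [symmDiff_of_ge hBA]
  -- elements of the difference have positive density but zero cdf
  have hdiff : ∀ x ∈ {x | 0 < f x} \ {x | 0 < cdfS μ f (f x)},
      0 < f x ∧ μ {y | f y ≤ f x} = 0 := by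
    rintro x ⟨hx1, hx2⟩
    refine ⟨hx1, ?_⟩
    simp only [mem_setOf_eq, not_lt] at hx2
    have h0 : cdfS μ f (f x) = 0 := le_antisymm hx2 ENNReal.toReal_nonneg
    have := (ENNReal.toReal_eq_zero_iff _).1 h0
    rcases this with h | h
    · exact h
    · exact absurd h (measure_ne_top μ _)
  by_cases hS : ∃ t > (0:ℝ), μ {x | f x ≤ t} = 0
  · -- nontrivial case: bound the difference by {0 < f ≤ T} where T = sSup S0
    obtain ⟨t₀, ht₀_pos, ht₀⟩ := hS
    set S0 : Set ℝ := {t | 0 < t ∧ μ {x | f x ≤ t} = 0} with hS0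
    have hS0ne : S0.Nonempty := ⟨t₀, ht₀_pos, ht₀⟩
    -- there is n with μ {f ≤ n} ≠ 0
    have hn : ∃ n : ℕ, μ {x | f x ≤ (n : ℝ)} ≠ 0 := by
      by_contra h
      push_neg at h
      have huniv : (⋃ n : ℕ, {x : Fin d → ℝ | f x ≤ (n : ℝ)}) = univ := by
        ext x
        simp only [mem_iUnion, mem_setOf_eq, mem_univ, iff_true]
        exact exists_nat_ge (f x)
      have h0 : μ (⋃ n : ℕ, {x : Fin d → ℝ | f x ≤ (n : ℝ)}) = 0 :=
        measure_iUnion_null h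
      rw [huniv, measure_univ] at h0
      exact one_ne_zero h0
    obtain ⟨n, hn⟩ := hn
    have hbdd : BddAbove S0 := by
      refine ⟨(n : ℝ), fun s hs => ?_⟩
      by_contra hns
      push_neg at hns
      exact hn (measure_mono_null (fun x hx => le_trans hx hns.le) hs.2)
    set T := sSup S0 with hT
    have hT_pos : 0 < T := lt_of_lt_of_le ht₀_pos (le_csSup hbdd ⟨ht₀_pos, ht₀⟩)
    -- μ {f < T} = 0
    have hlt : μ {x | f x < T} = 0 := by
      have hcover : {x : Fin d → ℝ | f x < T} ⊆
          ⋃ m : ℕ, {x : Fin d → ℝ | f x ≤ T - 1 / (m + 1)} := by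
        intro x hx
        have hx' : f x < T := hx
        obtain ⟨m, hm⟩ := exists_nat_one_div_lt (show (0:ℝ) < T - f x by linarith)
        exact mem_iUnion.2 ⟨m, by simp only [mem_setOf_eq]; linarith⟩
      refine measure_mono_null hcover (measure_iUnion_null fun m => ?_)
      have hmlt : T - 1 / (m + 1 : ℝ) < T := by
        have : (0:ℝ) < 1 / (m + 1) := by positivity
        linarith
      obtain ⟨s, hsS0, hslt⟩ := exists_lt_of_lt_csSup hS0ne hmlt
      exact measure_mono_null (fun x hx => le_trans hx hslt.le) hsS0.2
    have hμT : μ {x | f x ≤ T} = 0 := by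
      have hsub : {x : Fin d → ℝ | f x ≤ T} ⊆ {x | f x < T} ∪ {x | f x = T} := by
        intro x hx
        have hx' : f x ≤ T := hx
        rcases lt_or_eq_of_le hx' with h | h
        · exact Or.inl h
        · exact Or.inr h
      exact measure_mono_null hsub (measure_union_null hlt (hA2 T hT_pos))
    have hvol : volume ({x : Fin d → ℝ | 0 < f x} ∩ {x | f x ≤ T}) = 0 :=
      (hzero _).1 hμT
    refine measure_mono_null ?_ hvol
    intro x hx
    obtain ⟨hx1, hx2⟩ := hdiff x hx
    have : f x ∈ S0 := ⟨hx1, hx2⟩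
    exact ⟨hx1, le_csSup hbdd this⟩
  · -- trivial case: the difference is empty
    push_neg at hS
    have : {x | 0 < f x} \ {x | 0 < cdfS μ f (f x)} = (∅ : Set (Fin d → ℝ)) := by
      ext x
      simp only [mem_empty_iff_false, iff_false]
      intro hx
      obtain ⟨hx1, hx2⟩ := hdiff x hx
      exact hS (f x) hx1 hx2
    rw [this, measure_empty]
end
end

section
/- Let ε ∈ (0,1] and let s be a scoring function satisfying assumptions A3, A4 and A6. Then there exists a constant C > 0 such that, almost surely, for all n large enough, sup_{α ∈ [ε,1]} |F̂_s†(α) − F_s†(α)|² ≤ C (log n)/n. -/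
open MeasureTheory Set Filter
open scoped ENNReal Topology symmDiff

noncomputable section

/-- `a = sup {t : F_s(t) = 0}`, the lower endpoint of the support of `s(X)`. -/
def lowPt {d : ℕ} (μ : Measure (Fin d → ℝ)) (s : (Fin d → ℝ) → ℝ) : ℝ :=
  sSup {t | cdfS μ s t = 0}

/-- `b = inf {t : F_s(t) = 1}`, the upper endpoint of the support of `s(X)`. -/
def highPt {d : ℕ} (μ : Measure (Fin d → ℝ)) (s : (Fin d → ℝ) → ℝ) : ℝ :=
  sInf {t | cdfS μ s t = 1}

/-- Empirical mass `α̂_s(t)` based on the sample `X_1(ω), …, X_n(ω)`. -/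
def alphaHat {d : ℕ} {Ω : Type*} (s : (Fin d → ℝ) → ℝ) (X : ℕ → Ω → (Fin d → ℝ))
    (n : ℕ) (ω : Ω) (t : ℝ) : ℝ :=
  (∑ i ∈ Finset.range n, if t ≤ s (X i ω) then (1:ℝ) else 0) / n

/-- Generalized inverse of `α̂_s`. -/
def alphaHatInv {d : ℕ} {Ω : Type*} (s : (Fin d → ℝ) → ℝ) (X : ℕ → Ω → (Fin d → ℝ))
    (n : ℕ) (ω : Ω) (α : ℝ) : ℝ :=
  sInf {t | alphaHat s X n ω t ≤ α}

/-- Empirical MV curve `MV̂_s(α) = λ_s(α̂_s⁻¹(α))`. -/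
def MVhat {d : ℕ} {Ω : Type*} (s : (Fin d → ℝ) → ℝ) (X : ℕ → Ω → (Fin d → ℝ))
    (n : ℕ) (ω : Ω) (α : ℝ) : ℝ :=
  lamS s (alphaHatInv s X n ω α)

/-- Empirical cdf of `s(X_1(ω)), …, s(X_n(ω))`. -/
def cdfHat {d : ℕ} {Ω : Type*} (s : (Fin d → ℝ) → ℝ) (X : ℕ → Ω → (Fin d → ℝ))
    (n : ℕ) (ω : Ω) (t : ℝ) : ℝ :=
  (∑ i ∈ Finset.range n, if s (X i ω) ≤ t then (1:ℝ) else 0) / n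

/-- Empirical quantile function `F̂_s†(u) = inf {t : F̂_s(t) ≥ u}`. -/
def quantHat {d : ℕ} {Ω : Type*} (s : (Fin d → ℝ) → ℝ) (X : ℕ → Ω → (Fin d → ℝ))
    (n : ℕ) (ω : Ω) (u : ℝ) : ℝ :=
  sInf {t | u ≤ cdfHat s X n ω t}


section AuxLemmas
open Real

namespace EmpQuantAux

variable {d : ℕ}

lemma cdfS_mono (μ : Measure (Fin d → ℝ)) [IsFiniteMeasure μ] (s : (Fin d → ℝ) → ℝ) :
    Monotone (fun t => (μ {x | s x ≤ t}).toReal) := fun t u htu =>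
  ENNReal.toReal_mono (measure_ne_top _ _) (measure_mono fun x hx => le_trans hx htu)

lemma cdfS_nonneg (μ : Measure (Fin d → ℝ)) (s : (Fin d → ℝ) → ℝ) (t : ℝ) :
    0 ≤ (μ {x | s x ≤ t}).toReal := ENNReal.toReal_nonneg

lemma cdfS_le_one (μ : Measure (Fin d → ℝ)) [IsProbabilityMeasure μ] (s : (Fin d → ℝ) → ℝ)
    (t : ℝ) : (μ {x | s x ≤ t}).toReal ≤ 1 := by
  have h := prob_le_one (μ := μ) (s := {x | s x ≤ t})
  calc (μ {x | s x ≤ t}).toReal ≤ (1 : ℝ≥0∞).toReal :=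
        ENNReal.toReal_mono (by simp) h
    _ = 1 := by simp

lemma cdfS_neg (μ : Measure (Fin d → ℝ)) (s : (Fin d → ℝ) → ℝ) (hs : ∀ x, 0 ≤ s x)
    {t : ℝ} (ht : t < 0) : (μ {x | s x ≤ t}).toReal = 0 := by
  have : {x | s x ≤ t} = ∅ := by
    ext x; simp only [mem_setOf_eq, mem_empty_iff_false, iff_false, not_le]
    exact lt_of_lt_of_le ht (hs x)
  simp [this]

lemma cdfS_of_bound (μ : Measure (Fin d → ℝ)) [IsProbabilityMeasure μ] (s : (Fin d → ℝ) → ℝ)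
    {B t : ℝ} (hB : ∀ x, s x ≤ B) (ht : B ≤ t) : (μ {x | s x ≤ t}).toReal = 1 := by
  have : {x | s x ≤ t} = univ := eq_univ_of_forall fun x => le_trans (hB x) ht
  simp [this]

end EmpQuantAux

set_option linter.unusedSectionVars false
set_option linter.unusedVariables false
namespace EmpQuantAux2

variable {F : ℝ → ℝ}

lemma F_nonneg (hmono : Monotone F) (hneg : ∀ t < 0, F t = 0) (t : ℝ) : 0 ≤ F t := by
  rcases lt_or_ge t 0 with h | h
  · exact le_of_eq (hneg t h).symm
  · calc (0:ℝ) = F (-1) := (hneg (-1) (by norm_num)).symm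
      _ ≤ F t := hmono (by linarith)

lemma F_le_one (hmono : Monotone F) {B : ℝ} (hFB : ∀ t, B ≤ t → F t = 1) (t : ℝ) : F t ≤ 1 := by
  calc F t ≤ F (max t B) := hmono (le_max_left _ _)
    _ = 1 := hFB _ (le_max_right _ _)

lemma bddBelow_quantSet (hneg : ∀ t < 0, F t = 0) {α : ℝ} (hα : 0 < α) :
    BddBelow {t | α ≤ F t} := by
  refine ⟨0, fun t ht => ?_⟩
  by_contra h
  push_neg at h
  rw [mem_setOf_eq, hneg t h] at ht
  linarith

lemma quant_le (hneg : ∀ t < 0, F t = 0) {α t : ℝ} (hα : 0 < α) (h : α ≤ F t) :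
    sInf {u | α ≤ F u} ≤ t := csInf_le (bddBelow_quantSet hneg hα) h

lemma le_quant {α r : ℝ} (hne : ({t | α ≤ F t}).Nonempty) (h : ∀ t, α ≤ F t → r ≤ t) :
    r ≤ sInf {t | α ≤ F t} := le_csInf hne h

lemma quant_mono (hneg : ∀ t < 0, F t = 0) {α β : ℝ} (hα : 0 < α)
    (hβne : ({t | β ≤ F t}).Nonempty) (hαβ : α ≤ β) :
    sInf {t | α ≤ F t} ≤ sInf {t | β ≤ F t} :=
  csInf_le_csInf (bddBelow_quantSet hneg hα) hβne fun t ht => le_trans hαβ ht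

section Cont

variable (hcont : Continuous F) (hmono : Monotone F) {B : ℝ}
  (hFB : ∀ t, B ≤ t → F t = 1) (hneg : ∀ t < 0, F t = 0)

include hcont hmono hFB hneg

/-- `F (sSup {F = 0}) = 0`. -/
lemma F_lowPt_eq_zero : F (sSup {t | F t = 0}) = 0 := by
  have hcl : IsClosed {t | F t = 0} := isClosed_eq hcont continuous_const
  have hne : ({t | F t = 0}).Nonempty := ⟨-1, hneg (-1) (by norm_num)⟩
  have hbdd : BddAbove {t | F t = 0} := by
    refine ⟨B, fun t ht => ?_⟩
    by_contra h
    push_neg at h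
    rw [mem_setOf_eq, hFB t h.le] at ht
    norm_num at ht
  exact hcl.csSup_mem hne hbdd

lemma F_eq_zero_of_le {t : ℝ} (ht : t ≤ sSup {u | F u = 0}) : F t = 0 :=
  le_antisymm ((hmono ht).trans_eq (F_lowPt_eq_zero hcont hmono hFB hneg))
    (F_nonneg hmono hneg t)

/-- `F (sInf {F = 1}) = 1`. -/
lemma F_highPt_eq_one : F (sInf {t | F t = 1}) = 1 := by
  have hcl : IsClosed {t | F t = 1} := isClosed_eq hcont continuous_const
  have hne : ({t | F t = 1}).Nonempty := ⟨B, hFB B le_rfl⟩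
  have hbdd : BddBelow {t | F t = 1} := by
    refine ⟨0, fun t ht => ?_⟩
    by_contra h
    push_neg at h
    rw [mem_setOf_eq, hneg t h] at ht
    norm_num at ht
  exact hcl.csInf_mem hne hbdd

lemma F_eq_one_of_ge {t : ℝ} (ht : sInf {u | F u = 1} ≤ t) : F t = 1 :=
  le_antisymm (F_le_one hmono hFB t)
    ((F_highPt_eq_one hcont hmono hFB hneg).symm.trans_le (hmono ht))

lemma F_lt_one_of_lt {t : ℝ} (ht : t < sInf {u | F u = 1}) : F t < 1 := by
  rcases lt_or_eq_of_le (F_le_one hmono hFB t) with h | h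
  · exact h
  · exfalso
    have hbdd : BddBelow {t | F t = 1} := by
      refine ⟨0, fun u hu => ?_⟩
      by_contra hc
      push_neg at hc
      rw [mem_setOf_eq, hneg u hc] at hu
      norm_num at hu
    exact absurd (csInf_le hbdd (mem_setOf_eq ▸ h)) (not_le.mpr ht)

lemma lowPt_lt_highPt : sSup {t | F t = 0} < sInf {t | F t = 1} := by
  by_contra h
  push_neg at h
  have h1 := F_eq_zero_of_le hcont hmono hFB hneg (le_refl (sSup {u | F u = 0}))
  have h2 := F_eq_one_of_ge hcont hmono hFB hneg h
  rw [h1] at h2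
  norm_num at h2

/-- The quantile set is nonempty for `α ≤ 1`. -/
lemma quantSet_nonempty {α : ℝ} (hα : α ≤ 1) : ({t | α ≤ F t}).Nonempty :=
  ⟨B, by rw [mem_setOf_eq, hFB B le_rfl]; exact hα⟩

lemma quant_mem {α : ℝ} (hα : 0 < α) (hα1 : α ≤ 1) : α ≤ F (sInf {t | α ≤ F t}) := by
  have hcl : IsClosed {t | α ≤ F t} := isClosed_le continuous_const hcont
  exact hcl.csInf_mem (quantSet_nonempty hcont hmono hFB hneg hα1) (bddBelow_quantSet hneg hα)

lemma lowPt_lt_quant {α : ℝ} (hα : 0 < α) (hα1 : α ≤ 1) :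
    sSup {t | F t = 0} < sInf {t | α ≤ F t} := by
  by_contra h
  push_neg at h
  have := quant_mem hcont hmono hFB hneg hα hα1
  rw [F_eq_zero_of_le hcont hmono hFB hneg h] at this
  linarith

/-- `F (Q α) = α` for `α ∈ (0, 1]`. -/
lemma F_quant_eq {α : ℝ} (hα : 0 < α) (hα1 : α ≤ 1) : F (sInf {t | α ≤ F t}) = α := by
  set q := sInf {t | α ≤ F t} with hq
  refine le_antisymm ?_ (quant_mem hcont hmono hFB hneg hα hα1)
  by_contra h
  push_neg at h
  set a := sSup {t | F t = 0} with ha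
  have haq : a ≤ q := (lowPt_lt_quant hcont hmono hFB hneg hα hα1).le
  have hIVT := intermediate_value_Icc haq hcont.continuousOn
  have hmem : α ∈ Icc (F a) (F q) := by
    constructor
    · rw [F_lowPt_eq_zero hcont hmono hFB hneg]; exact hα.le
    · exact h.le
  obtain ⟨t, htI, htF⟩ := hIVT hmem
  have h1 : q ≤ t := csInf_le (bddBelow_quantSet hneg hα) (le_of_eq htF.symm)
  have h2 : t = q := le_antisymm htI.2 h1
  rw [← h2, htF] at h
  exact lt_irrefl _ h

lemma quant_lt_highPt {α : ℝ} (hα : 0 < α) (hα1 : α < 1) :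
    sInf {t | α ≤ F t} < sInf {t | F t = 1} := by
  by_contra h
  push_neg at h
  have h1 := F_eq_one_of_ge hcont hmono hFB hneg h
  rw [F_quant_eq hcont hmono hFB hneg hα hα1.le] at h1
  linarith

lemma quant_le_highPt {α : ℝ} (hα : 0 < α) (hα1 : α ≤ 1) :
    sInf {t | α ≤ F t} ≤ sInf {t | F t = 1} := by
  refine csInf_le (bddBelow_quantSet hneg hα) ?_
  rw [mem_setOf_eq, F_highPt_eq_one hcont hmono hFB hneg]
  exact hα1

lemma quant_one_eq : sInf {t | (1:ℝ) ≤ F t} = sInf {t | F t = 1} := by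
  refine le_antisymm (quant_le_highPt hcont hmono hFB hneg one_pos le_rfl) ?_
  refine le_csInf (quantSet_nonempty hcont hmono hFB hneg le_rfl) fun t ht => ?_
  have hbdd : BddBelow {t | F t = 1} := by
    refine ⟨0, fun u hu => ?_⟩
    by_contra hc
    push_neg at hc
    rw [mem_setOf_eq, hneg u hc] at hu
    norm_num at hu
  exact csInf_le hbdd (le_antisymm (F_le_one hmono hFB t) ht)

end Cont
end EmpQuantAux2

set_option linter.unusedSectionVars false
set_option linter.unusedVariables false
namespace EmpQuantAux3

/-- Mean-value growth bound for `F` using a density lower bound. -/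
lemma F_growth {F fs : ℝ → ℝ} {a b t₀ c : ℝ}
    (hFcont : Continuous F)
    (hderiv : ∀ t ∈ Ioo a b, HasDerivAt F (fs t) t)
    (hc : ∀ t, t₀ ≤ t → t < b → c ≤ fs t)
    (ha : a < t₀) {t1 t2 : ℝ} (h1 : t₀ ≤ t1) (h12 : t1 ≤ t2) (h2 : t2 ≤ b)
    (hc0 : 0 ≤ c) :
    c * (t2 - t1) ≤ F t2 - F t1 := by
  rcases eq_or_lt_of_le h12 with heq | hlt
  · simp [heq]
  have hsub : Ioo t1 t2 ⊆ Ioo a b := fun x hx =>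
    ⟨lt_of_lt_of_le ha (le_trans h1 hx.1.le), lt_of_lt_of_le hx.2 h2⟩
  obtain ⟨ξ, hξ, hslope⟩ := exists_hasDerivAt_eq_slope F fs hlt
    (hFcont.continuousOn) (fun x hx => hderiv x (hsub hx))
  have hξc : c ≤ fs ξ := hc ξ (le_trans h1 hξ.1.le) (lt_of_lt_of_le hξ.2 h2)
  have h21 : 0 < t2 - t1 := sub_pos.mpr hlt
  have : F t2 - F t1 = fs ξ * (t2 - t1) := by
    field_simp at hslope
    linarith [hslope]
  rw [this]
  exact mul_le_mul_of_nonneg_right hξc h21.le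

lemma exp_quad_bound {x : ℝ} (h : |x| ≤ 1) : Real.exp x ≤ 1 + x + x ^ 2 := by
  have h2 := Real.exp_bound h (n := 2) (by norm_num)
  have hsum : ∑ m ∈ Finset.range 2, x ^ m / (Nat.factorial m) = 1 + x := by
    simp [Finset.sum_range_succ]
  rw [hsum] at h2
  norm_num [Nat.factorial] at h2
  have habs : |x| ^ 2 = x ^ 2 := sq_abs x
  have := abs_le.mp h2
  nlinarith [this.2, sq_nonneg x]

lemma bernoulli_mgf_bound {p lam : ℝ} (hp0 : 0 ≤ p) (hp1 : p ≤ 1) (hlam : |lam| ≤ 1) :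
    Real.exp (-(lam * p)) * (1 - p + p * Real.exp lam) ≤ Real.exp (lam ^ 2) := by
  have h1 : (1:ℝ) - p + p * Real.exp lam = 1 + p * (Real.exp lam - 1) := by ring
  have h2 : 1 + p * (Real.exp lam - 1) ≤ Real.exp (p * (Real.exp lam - 1)) := by
    have := Real.add_one_le_exp (p * (Real.exp lam - 1))
    linarith
  have h3 : Real.exp (-(lam * p)) * (1 - p + p * Real.exp lam)
      ≤ Real.exp (-(lam * p)) * Real.exp (p * (Real.exp lam - 1)) := by
    rw [h1]
    exact mul_le_mul_of_nonneg_left h2 (Real.exp_pos _).le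
  refine h3.trans ?_
  rw [← Real.exp_add]
  apply Real.exp_le_exp.mpr
  have h4 : Real.exp lam - 1 - lam ≤ lam ^ 2 := by
    have := exp_quad_bound hlam
    nlinarith
  have h5 : 0 ≤ Real.exp lam - 1 - lam := by
    have := Real.add_one_le_exp lam
    linarith
  nlinarith [sq_nonneg lam]

variable {Ω : Type*} [MeasurableSpace Ω]

lemma integral_exp_indicator (P : Measure Ω) [IsProbabilityMeasure P]
    {A : Set Ω} (hA : MeasurableSet A) (lam : ℝ) :
    ∫ ω, Real.exp (lam * (A.indicator (fun _ => (1:ℝ)) ω - (P A).toReal)) ∂P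
      = Real.exp (-(lam * (P A).toReal))
          * (1 - (P A).toReal + (P A).toReal * Real.exp lam) := by
  set p := (P A).toReal with hp
  have hfun : (fun ω => Real.exp (lam * (A.indicator (fun _ => (1:ℝ)) ω - p)))
      = fun ω => Real.exp (-(lam * p))
          + A.indicator (fun _ => Real.exp (lam * (1 - p)) - Real.exp (-(lam * p))) ω := by
    funext ω
    by_cases h : ω ∈ A
    · simp only [Set.indicator_of_mem h]
      ring_nf
    · simp only [Set.indicator_of_notMem h]
      ring_nf
  rw [hfun, integral_add (integrable_const _) ((integrable_const _).indicator hA),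
    integral_const, integral_indicator_const _ hA]
  have hexp : Real.exp (lam * (1 - p)) = Real.exp lam * Real.exp (-(lam * p)) := by
    rw [← Real.exp_add]; ring_nf
  have hmeas : P.real Set.univ = 1 := by simp
  rw [hmeas, hexp, smul_eq_mul, smul_eq_mul, measureReal_def, ← hp]
  ring

open ProbabilityTheory in
lemma chernoff_preimage {d : ℕ} (P : Measure Ω) [IsProbabilityMeasure P]
    (X : ℕ → Ω → (Fin d → ℝ)) (hX_meas : ∀ i, Measurable (X i))
    (hX_indep : ProbabilityTheory.iIndepFun X P)
    (S : Set (Fin d → ℝ)) (hS : MeasurableSet S) {p : ℝ}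
    (hp : ∀ i, (P ((X i) ⁻¹' S)).toReal = p)
    {n : ℕ} (hn : 1 ≤ n) {η : ℝ} (hη : 0 < η) (hη2 : η ≤ 2) :
    P {ω | (n:ℝ) * η ≤ ∑ i ∈ Finset.range n, (S.indicator (fun _ => (1:ℝ)) (X i ω) - p)}
      ≤ ENNReal.ofReal (Real.exp (-((n:ℝ) * η ^ 2 / 4))) := by
  classical
  set lam := η / 2 with hlamdef
  have hlam0 : 0 ≤ lam := by positivity
  have hlam1 : |lam| ≤ 1 := by
    rw [abs_of_nonneg hlam0]
    simp only [hlamdef]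
    linarith
  set g : (Fin d → ℝ) → ℝ := fun x => S.indicator (fun _ => (1:ℝ)) x - p with hgdef
  have hg : Measurable g := (measurable_const.indicator hS).sub measurable_const
  set Z : ℕ → Ω → ℝ := fun i => g ∘ X i with hZdef
  have hZmeas : ∀ i, Measurable (Z i) := fun i => hg.comp (hX_meas i)
  have hindep : iIndepFun Z P := hX_indep.comp _ fun _ => hg
  have hp0 : 0 ≤ p := (hp 0) ▸ ENNReal.toReal_nonneg
  have hp1 : p ≤ 1 := by
    rw [← hp 0]
    calc (P (X 0 ⁻¹' S)).toReal ≤ (1 : ℝ≥0∞).toReal :=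
          ENNReal.toReal_mono (by simp) prob_le_one
      _ = 1 := by simp
  have hZbd : ∀ i ω, |Z i ω| ≤ 2 := by
    intro i ω
    simp only [hZdef, hgdef, Function.comp_apply]
    by_cases h : X i ω ∈ S
    · rw [Set.indicator_of_mem h]
      rw [abs_le]; constructor <;> nlinarith
    · rw [Set.indicator_of_notMem h]
      rw [abs_le]; constructor <;> nlinarith
  have h_int : ∀ i ∈ Finset.range n, Integrable (fun ω => Real.exp (lam * Z i ω)) P := by
    intro i _
    refine ⟨((hZmeas i).const_mul lam).exp.aestronglyMeasurable, ?_⟩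
    refine HasFiniteIntegral.of_bounded (C := Real.exp 2) ?_
    filter_upwards with ω
    rw [Real.norm_eq_abs, abs_of_pos (Real.exp_pos _)]
    apply Real.exp_le_exp.mpr
    calc lam * Z i ω ≤ |lam * Z i ω| := le_abs_self _
      _ = |lam| * |Z i ω| := abs_mul _ _
      _ ≤ 1 * 2 := mul_le_mul hlam1 (hZbd i ω) (abs_nonneg _) zero_le_one
      _ = 2 := by norm_num
  have hmgf_i : ∀ i, mgf (Z i) P lam ≤ Real.exp (lam ^ 2) := by
    intro i
    have hA : MeasurableSet ((X i) ⁻¹' S) := (hX_meas i) hS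
    have heq : mgf (Z i) P lam
        = ∫ ω, Real.exp (lam * (((X i) ⁻¹' S).indicator (fun _ => (1:ℝ)) ω
            - (P ((X i) ⁻¹' S)).toReal)) ∂P := by
      rw [hp i]
      unfold mgf
      congr 1
    rw [heq, integral_exp_indicator P hA lam, hp i]
    exact bernoulli_mgf_bound hp0 hp1 hlam1
  have hsum_mgf : mgf (∑ i ∈ Finset.range n, Z i) P lam ≤ Real.exp ((n:ℝ) * lam ^ 2) := by
    rw [hindep.mgf_sum hZmeas]
    calc ∏ i ∈ Finset.range n, mgf (Z i) P lam
        ≤ ∏ _i ∈ Finset.range n, Real.exp (lam ^ 2) :=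
          Finset.prod_le_prod (fun i _ => mgf_nonneg) fun i _ => hmgf_i i
      _ = Real.exp (lam ^ 2) ^ n := by rw [Finset.prod_const, Finset.card_range]
      _ = Real.exp ((n:ℝ) * lam ^ 2) := by rw [← Real.exp_nat_mul]
  have h_int_sum : Integrable (fun ω => Real.exp (lam * (∑ i ∈ Finset.range n, Z i) ω)) P :=
    hindep.integrable_exp_mul_sum hZmeas h_int
  have hch := measure_ge_le_exp_mul_mgf (μ := P) (X := ∑ i ∈ Finset.range n, Z i)
    (t := lam) ((n:ℝ) * η) hlam0 h_int_sum
  have hev : {ω | (n:ℝ) * η ≤ ∑ i ∈ Finset.range n, (S.indicator (fun _ => (1:ℝ)) (X i ω) - p)}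
      = {ω | (n:ℝ) * η ≤ (∑ i ∈ Finset.range n, Z i) ω} := by
    ext ω
    simp only [mem_setOf_eq, Finset.sum_apply, hZdef, hgdef, Function.comp_apply]
  have hnum : Real.exp (-lam * ((n:ℝ) * η)) * Real.exp ((n:ℝ) * lam ^ 2)
      = Real.exp (-((n:ℝ) * η ^ 2 / 4)) := by
    rw [← Real.exp_add]
    congr 1
    simp only [hlamdef]
    ring
  rw [hev]
  set E := {ω | (n:ℝ) * η ≤ (∑ i ∈ Finset.range n, Z i) ω} with hE
  have hfin : P E ≠ ∞ := measure_ne_top _ _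
  calc P E = ENNReal.ofReal ((P E).toReal) := (ENNReal.ofReal_toReal hfin).symm
    _ ≤ ENNReal.ofReal (Real.exp (-((n:ℝ) * η ^ 2 / 4))) := by
        apply ENNReal.ofReal_le_ofReal
        calc (P E).toReal ≤ Real.exp (-lam * ((n:ℝ) * η)) * mgf (∑ i ∈ Finset.range n, Z i) P lam := hch
          _ ≤ Real.exp (-lam * ((n:ℝ) * η)) * Real.exp ((n:ℝ) * lam ^ 2) :=
              mul_le_mul_of_nonneg_left hsum_mgf (Real.exp_pos _).le
          _ = Real.exp (-((n:ℝ) * η ^ 2 / 4)) := hnum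

open ProbabilityTheory in
lemma chernoff_cdf_upper {d : ℕ} (P : Measure Ω) [IsProbabilityMeasure P]
    (X : ℕ → Ω → (Fin d → ℝ)) (hX_meas : ∀ i, Measurable (X i))
    (hX_indep : ProbabilityTheory.iIndepFun X P)
    (s : (Fin d → ℝ) → ℝ) (hs_meas : Measurable s) (t : ℝ) {p : ℝ}
    (hp : ∀ i, (P {ω | s (X i ω) ≤ t}).toReal = p)
    {n : ℕ} (hn : 1 ≤ n) {η : ℝ} (hη : 0 < η) (hη2 : η ≤ 2) :
    P {ω | η ≤ (∑ i ∈ Finset.range n, if s (X i ω) ≤ t then (1:ℝ) else 0) / n - p}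
      ≤ ENNReal.ofReal (Real.exp (-((n:ℝ) * η ^ 2 / 4))) := by
  classical
  set S : Set (Fin d → ℝ) := {x | s x ≤ t} with hSdef
  have hS : MeasurableSet S := measurableSet_le hs_meas measurable_const
  have hp' : ∀ i, (P ((X i) ⁻¹' S)).toReal = p := hp
  have hn0 : (0:ℝ) < n := by exact_mod_cast hn
  have hev : {ω | η ≤ (∑ i ∈ Finset.range n, if s (X i ω) ≤ t then (1:ℝ) else 0) / n - p}
      = {ω | (n:ℝ) * η ≤ ∑ i ∈ Finset.range n, (S.indicator (fun _ => (1:ℝ)) (X i ω) - p)} := by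
    ext ω
    have hid : ∑ i ∈ Finset.range n, (S.indicator (fun _ => (1:ℝ)) (X i ω) - p)
        = (∑ i ∈ Finset.range n, if s (X i ω) ≤ t then (1:ℝ) else 0) - n * p := by
      rw [Finset.sum_sub_distrib, Finset.sum_const, Finset.card_range, nsmul_eq_mul]
      congr 1
    simp only [mem_setOf_eq, hid]
    rw [show (∑ i ∈ Finset.range n, if s (X i ω) ≤ t then (1:ℝ) else 0) / n - p
        = ((∑ i ∈ Finset.range n, if s (X i ω) ≤ t then (1:ℝ) else 0) - n * p) / n
        from by field_simp, le_div_iff₀ hn0]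
    constructor <;> intro h <;> linarith
  rw [hev]
  exact chernoff_preimage P X hX_meas hX_indep S hS hp' hn hη hη2

open ProbabilityTheory in
lemma chernoff_cdf_lower {d : ℕ} (P : Measure Ω) [IsProbabilityMeasure P]
    (X : ℕ → Ω → (Fin d → ℝ)) (hX_meas : ∀ i, Measurable (X i))
    (hX_indep : ProbabilityTheory.iIndepFun X P)
    (s : (Fin d → ℝ) → ℝ) (hs_meas : Measurable s) (t : ℝ) {p : ℝ}
    (hp : ∀ i, (P {ω | s (X i ω) ≤ t}).toReal = p)
    {n : ℕ} (hn : 1 ≤ n) {η : ℝ} (hη : 0 < η) (hη2 : η ≤ 2) :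
    P {ω | η ≤ p - (∑ i ∈ Finset.range n, if s (X i ω) ≤ t then (1:ℝ) else 0) / n}
      ≤ ENNReal.ofReal (Real.exp (-((n:ℝ) * η ^ 2 / 4))) := by
  classical
  set S : Set (Fin d → ℝ) := {x | s x ≤ t}ᶜ with hSdef
  have hS : MeasurableSet S := (measurableSet_le hs_meas measurable_const).compl
  have hp' : ∀ i, (P ((X i) ⁻¹' S)).toReal = 1 - p := by
    intro i
    have hpre : (X i) ⁻¹' S = ({ω | s (X i ω) ≤ t})ᶜ := rfl
    have hmeasA : MeasurableSet {ω | s (X i ω) ≤ t} :=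
      (hX_meas i) (measurableSet_le hs_meas measurable_const)
    rw [hpre, measure_compl hmeasA (measure_ne_top _ _), measure_univ,
      ENNReal.toReal_sub_of_le prob_le_one ENNReal.one_ne_top, ENNReal.toReal_one, hp i]
  have hn0 : (0:ℝ) < n := by exact_mod_cast hn
  have hev : {ω | η ≤ p - (∑ i ∈ Finset.range n, if s (X i ω) ≤ t then (1:ℝ) else 0) / n}
      = {ω | (n:ℝ) * η ≤ ∑ i ∈ Finset.range n,
          (S.indicator (fun _ => (1:ℝ)) (X i ω) - (1 - p))} := by
    ext ω
    have hid : ∑ i ∈ Finset.range n, (S.indicator (fun _ => (1:ℝ)) (X i ω) - (1 - p))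
        = n * p - (∑ i ∈ Finset.range n, if s (X i ω) ≤ t then (1:ℝ) else 0) := by
      rw [Finset.sum_sub_distrib, Finset.sum_const, Finset.card_range, nsmul_eq_mul]
      have hS_sum : ∑ i ∈ Finset.range n, S.indicator (fun _ => (1:ℝ)) (X i ω)
          = (n:ℝ) - ∑ i ∈ Finset.range n, (if s (X i ω) ≤ t then (1:ℝ) else 0) := by
        rw [eq_sub_iff_add_eq, ← Finset.sum_add_distrib]
        have : ∀ i ∈ Finset.range n,
            S.indicator (fun _ => (1:ℝ)) (X i ω) + (if s (X i ω) ≤ t then (1:ℝ) else 0) = 1 := by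
          intro i _
          by_cases h : s (X i ω) ≤ t
          · rw [if_pos h, Set.indicator_of_notMem (by simp [hSdef, h])]
            norm_num
          · rw [if_neg h, Set.indicator_of_mem (by simp [hSdef, h])]
            norm_num
        rw [Finset.sum_congr rfl this, Finset.sum_const, Finset.card_range, nsmul_eq_mul, mul_one]
      rw [hS_sum]
      ring
    simp only [mem_setOf_eq, hid]
    rw [show p - (∑ i ∈ Finset.range n, if s (X i ω) ≤ t then (1:ℝ) else 0) / n
        = ((n:ℝ) * p - (∑ i ∈ Finset.range n, if s (X i ω) ≤ t then (1:ℝ) else 0)) / n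
        from by field_simp, le_div_iff₀ hn0]
    constructor <;> intro h <;> linarith
  rw [hev]
  exact chernoff_preimage P X hX_meas hX_indep S hS hp' hn hη hη2

end EmpQuantAux3

namespace EmpQuantAux4

/-- The deviation level `η_n = √(12 log n / n)`. -/
noncomputable def etaN (n : ℕ) : ℝ := Real.sqrt (12 * Real.log n / n)

/-- Grid point `min (ε + j/n) 1`. -/
noncomputable def gridPt (ε : ℝ) (n j : ℕ) : ℝ := min (ε + (j:ℝ) / n) 1

lemma three_log_le {n : ℕ} (hn : 36 ≤ n) : 3 * Real.log n ≤ n := by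
  have hn0 : (0:ℝ) < n := by
    have : (36:ℝ) ≤ n := by exact_mod_cast hn
    linarith
  have h1 : Real.log n = 2 * Real.log (Real.sqrt n) := by
    rw [Real.log_sqrt hn0.le]; ring
  have h2 : Real.log (Real.sqrt n) ≤ Real.sqrt n - 1 :=
    Real.log_le_sub_one_of_pos (Real.sqrt_pos.mpr hn0)
  have h3 : (6:ℝ) ≤ Real.sqrt n := by
    have h36 : (36:ℝ) ≤ n := by exact_mod_cast hn
    calc (6:ℝ) = Real.sqrt 36 := by
          rw [show (36:ℝ) = 6^2 by norm_num, Real.sqrt_sq (by norm_num)]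
      _ ≤ Real.sqrt n := Real.sqrt_le_sqrt h36
  have h4 : Real.sqrt n * Real.sqrt n = n := Real.mul_self_sqrt hn0.le
  nlinarith

lemma etaN_sq {n : ℕ} (hn : 1 ≤ n) : (etaN n)^2 = 12 * Real.log n / n := by
  have hn0 : (0:ℝ) < n := by exact_mod_cast hn
  have hlog : 0 ≤ Real.log n := Real.log_nonneg (by exact_mod_cast hn)
  exact Real.sq_sqrt (by positivity)

lemma etaN_pos {n : ℕ} (hn : 2 ≤ n) : 0 < etaN n := by
  have hn1 : (1:ℝ) < n := by exact_mod_cast hn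
  have hlog : 0 < Real.log n := Real.log_pos hn1
  exact Real.sqrt_pos.mpr (by positivity)

lemma etaN_le_two {n : ℕ} (hn : 36 ≤ n) : etaN n ≤ 2 := by
  have hn0 : (0:ℝ) < n := by
    have : (36:ℝ) ≤ n := by exact_mod_cast hn
    linarith
  have h3 := three_log_le hn
  have h4 : 12 * Real.log n / n ≤ 4 := by
    rw [div_le_iff₀ hn0]; nlinarith
  calc etaN n ≤ Real.sqrt 4 := Real.sqrt_le_sqrt h4
    _ = 2 := by rw [show (4:ℝ) = 2^2 by norm_num, Real.sqrt_sq (by norm_num)]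

lemma exp_etaN {n : ℕ} (hn : 1 ≤ n) :
    Real.exp (-((n:ℝ) * (etaN n)^2 / 4)) = 1 / (n:ℝ)^3 := by
  have hn0 : (0:ℝ) < n := by exact_mod_cast hn
  rw [etaN_sq hn, show (n:ℝ) * (12 * Real.log n / n) / 4 = 3 * Real.log n from by
    field_simp; ring]
  rw [show (3:ℝ) * Real.log n = ((3:ℕ):ℝ) * Real.log n from by norm_num,
    Real.exp_neg, Real.exp_nat_mul, Real.exp_log hn0, one_div]

lemma etaN_tendsto : Tendsto etaN atTop (𝓝 0) := by
  have h1 : Tendsto (fun x : ℝ => Real.log x / x) atTop (𝓝 0) :=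
    Real.isLittleO_log_id_atTop.tendsto_div_nhds_zero
  have h2 : Tendsto (fun n : ℕ => Real.log n / n) atTop (𝓝 0) :=
    h1.comp tendsto_natCast_atTop_atTop
  have h3 : Tendsto (fun n : ℕ => 12 * Real.log n / n) atTop (𝓝 0) := by
    have := h2.const_mul (12:ℝ)
    simpa [mul_div_assoc] using this
  have h5 := (Real.continuous_sqrt.tendsto 0).comp h3
  exact (by simpa only [Function.comp_def, Real.sqrt_zero] using h5 :
    Tendsto (fun n : ℕ => Real.sqrt (12 * Real.log n / n)) atTop (𝓝 0))

lemma one_div_le_etaN : ∀ᶠ n : ℕ in atTop, 1/(n:ℝ) ≤ etaN n := by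
  filter_upwards [eventually_ge_atTop 36] with n hn
  have hn0 : (0:ℝ) < n := by
    have : (36:ℝ) ≤ n := by exact_mod_cast hn
    linarith
  have hn36 : (36:ℝ) ≤ n := by exact_mod_cast hn
  have hlog : (0.5:ℝ) ≤ Real.log n := by
    have h2 := Real.log_two_gt_d9
    have : Real.log 2 ≤ Real.log n := by
      apply Real.log_le_log (by norm_num)
      linarith
    linarith
  rw [etaN, Real.le_sqrt (by positivity) (by positivity)]
  rw [div_pow, one_pow, div_le_div_iff₀ (by positivity) hn0]
  nlinarith

lemma summable_four_div_sq : Summable (fun n : ℕ => (4:ℝ) / n^2) := by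
  have h1 : Summable (fun n : ℕ => (1:ℝ) / n^2) :=
    summable_one_div_nat_pow.mpr (by norm_num)
  have := h1.mul_left 4
  exact this.congr fun n => by ring

lemma gridPt_ge {ε : ℝ} (hε1 : ε ≤ 1) {n j : ℕ} : ε ≤ gridPt ε n j := by
  have h : (0:ℝ) ≤ (j:ℝ)/n := by positivity
  exact le_min (by linarith) hε1

lemma gridPt_le_one {ε : ℝ} (hε : ε ≤ 1) {n j : ℕ} : gridPt ε n j ≤ 1 := min_le_right _ _

lemma gridPt_mono {ε : ℝ} {n : ℕ} {j k : ℕ} (hjk : j ≤ k) :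
    gridPt ε n j ≤ gridPt ε n k := by
  apply min_le_min _ le_rfl
  have h : (j:ℝ) ≤ k := by exact_mod_cast hjk
  have hn0 : (0:ℝ) ≤ n := Nat.cast_nonneg n
  gcongr

lemma gridPt_step {ε : ℝ} {n j : ℕ} (hn : 0 < n) :
    gridPt ε n (j+1) ≤ gridPt ε n j + 1/(n:ℝ) := by
  have hn0 : (0:ℝ) < n := by exact_mod_cast hn
  rcases min_cases (ε + (j:ℝ)/n) 1 with ⟨h1, h2⟩ | ⟨h1, h2⟩
  · calc gridPt ε n (j+1) ≤ ε + ((j:ℝ)+1)/n := by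
          simp only [gridPt]; push_cast; exact min_le_left _ _
      _ = (ε + (j:ℝ)/n) + 1/n := by field_simp; ring
      _ = gridPt ε n j + 1/n := by simp only [gridPt]; rw [h1]
  · calc gridPt ε n (j+1) ≤ 1 := min_le_right _ _
      _ = gridPt ε n j := by simp only [gridPt]; rw [h1]
      _ ≤ gridPt ε n j + 1/n := by
          have := one_div_pos.mpr hn0
          linarith

lemma gridPt_floor {ε α : ℝ} (hε : 0 < ε) {n : ℕ} (hn : 1 ≤ n) (hα : ε ≤ α) (hα1 : α ≤ 1) :
    ∃ j : ℕ, j + 1 ≤ n ∧ gridPt ε n j ≤ α ∧ α ≤ gridPt ε n (j+1) := by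
  have hn0 : (0:ℝ) < n := by exact_mod_cast hn
  have h0 : (0:ℝ) ≤ (α - ε) * n := by nlinarith
  refine ⟨⌊(α - ε) * n⌋₊, ?_, ?_, ?_⟩
  · have h1 : (α - ε) * n < n := by nlinarith
    have h2 := (Nat.floor_lt h0).mpr h1
    omega
  · refine le_trans (min_le_left _ _) ?_
    have h3 : (⌊(α - ε) * n⌋₊ : ℝ) ≤ (α - ε) * n := Nat.floor_le h0
    have h4 : (⌊(α - ε) * n⌋₊ : ℝ) / n ≤ α - ε := by
      rw [div_le_iff₀ hn0]; linarith
    linarith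
  · refine le_min ?_ hα1
    have h5 : (α - ε) * n < ⌊(α - ε) * n⌋₊ + 1 := Nat.lt_floor_add_one _
    have h6 : α - ε < ((⌊(α - ε) * n⌋₊ : ℕ) + 1 : ℝ) / n := by
      rw [lt_div_iff₀ hn0]; push_cast; linarith
    push_cast
    push_cast at h6
    linarith

end EmpQuantAux4

end AuxLemmas

set_option maxHeartbeats 1600000 in
/-- almost sure uniform rate `(log n)/n` for the squared deviation of the
empirical quantile function on `[ε,1]`. -/
theorem empirical_quantile_sq_rate {d : ℕ} {Ω : Type*} [MeasurableSpace Ω]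
    (ℙ : Measure Ω) [IsProbabilityMeasure ℙ]
    (f : (Fin d → ℝ) → ℝ) (hf_meas : Measurable f) (hf_nonneg : ∀ x, 0 ≤ f x)
    (hf_prob : IsProbabilityMeasure (densMeasure f))
    (X : ℕ → Ω → (Fin d → ℝ)) (hX_meas : ∀ i, Measurable (X i))
    (hX_law : ∀ i, Measure.map (X i) ℙ = densMeasure f)
    (hX_indep : ProbabilityTheory.iIndepFun X ℙ)
    (s : (Fin d → ℝ) → ℝ) (hs : IsScoring s)
    -- A3: `s` is bounded
    (hA3 : ∃ B, ∀ x, s x ≤ B)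
    -- A4: `F_s` is continuous, twice differentiable on `(a,b)` with positive derivative `f_s`
    (hFs_cont : Continuous (cdfS (densMeasure f) s))
    (fs : ℝ → ℝ)
    (hfs : ∀ t ∈ Ioo (lowPt (densMeasure f) s) (highPt (densMeasure f) s),
      HasDerivAt (cdfS (densMeasure f) s) (fs t) t)
    (hfs' : ∃ fs' : ℝ → ℝ, ∀ t ∈ Ioo (lowPt (densMeasure f) s) (highPt (densMeasure f) s),
      HasDerivAt fs (fs' t) t)
    (hfs_pos : ∀ t ∈ Ioo (lowPt (densMeasure f) s) (highPt (densMeasure f) s), 0 < fs t)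
    -- A6: `f_s` has a positive finite limit at `b⁻`
    (hA6 : ∃ A : ℝ, 0 < A ∧ Tendsto fs (𝓝[<] (highPt (densMeasure f) s)) (𝓝 A))
    (ε : ℝ) (hε : ε ∈ Ioc (0:ℝ) 1) :
    ∃ C > (0:ℝ), ∀ᵐ ω ∂ℙ, ∀ᶠ n : ℕ in atTop, ∀ α ∈ Icc ε 1,
      |quantHat s X n ω α - quantS (densMeasure f) s α|^2 ≤ C * Real.log n / n := by
  classical
  obtain ⟨hs_meas, hs_nonneg, -⟩ := hs
  obtain ⟨B, hB⟩ := hA3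
  obtain ⟨A, hA_pos, hA_lim⟩ := hA6
  obtain ⟨fs', hfs'⟩ := hfs'
  haveI hPμ : IsProbabilityMeasure (densMeasure f) := hf_prob
  set μ := densMeasure f with hμdef
  obtain ⟨hεpos, hε1⟩ := hε
  have hFmono : Monotone (cdfS μ s) := EmpQuantAux.cdfS_mono μ s
  have hFB : ∀ t, B ≤ t → cdfS μ s t = 1 := fun t ht => EmpQuantAux.cdfS_of_bound μ s hB ht
  have hFneg : ∀ t < 0, cdfS μ s t = 0 := fun t ht => EmpQuantAux.cdfS_neg μ s hs_nonneg ht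
  have hFcont : Continuous (cdfS μ s) := hFs_cont
  have hlow_eq : lowPt μ s = sSup {t | cdfS μ s t = 0} := rfl
  have hhigh_eq : highPt μ s = sInf {t | cdfS μ s t = 1} := rfl
  have hQ_eq : ∀ α : ℝ, 0 < α → α ≤ 1 → cdfS μ s (quantS μ s α) = α := fun α h1 h2 =>
    EmpQuantAux2.F_quant_eq hFcont hFmono hFB hFneg h1 h2
  have hQ_le_b : ∀ α : ℝ, 0 < α → α ≤ 1 → quantS μ s α ≤ highPt μ s := fun α h1 h2 => by
    rw [hhigh_eq]
    exact EmpQuantAux2.quant_le_highPt hFcont hFmono hFB hFneg h1 h2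
  have hQ_mono : ∀ α β : ℝ, 0 < α → α ≤ β → β ≤ 1 → quantS μ s α ≤ quantS μ s β :=
    fun α β h1 h2 h3 =>
    EmpQuantAux2.quant_mono hFneg h1
      (EmpQuantAux2.quantSet_nonempty hFcont hFmono hFB hFneg h3) h2
  have hεhalf : 0 < ε/2 := by linarith
  have hεhalf1 : ε/2 ≤ 1 := by linarith
  have ha_lt_t0 : lowPt μ s < quantS μ s (ε/2) := by
    rw [hlow_eq]
    exact EmpQuantAux2.lowPt_lt_quant hFcont hFmono hFB hFneg hεhalf hεhalf1
  have ht0_lt_b : quantS μ s (ε/2) < highPt μ s := by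
    rw [hhigh_eq]
    exact EmpQuantAux2.quant_lt_highPt hFcont hFmono hFB hFneg hεhalf (by linarith)
  -- density lower bound constant
  obtain ⟨c, hc_pos, hc_lb⟩ :
      ∃ c : ℝ, 0 < c ∧ ∀ t, quantS μ s (ε/2) ≤ t → t < highPt μ s → c ≤ fs t := by
    have hev2 : ∀ᶠ t in 𝓝[<] (highPt μ s), A/2 < fs t :=
      hA_lim.eventually (eventually_gt_nhds (by linarith))
    obtain ⟨l, hl, hIoo⟩ := (mem_nhdsLT_iff_exists_Ioo_subset' ht0_lt_b).mp hev2
    set t₁ := max l (quantS μ s (ε/2)) with ht₁def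
    have ht₁_lt_b : t₁ < highPt μ s := max_lt hl ht0_lt_b
    have hIcc_sub : Icc (quantS μ s (ε/2)) t₁ ⊆ Ioo (lowPt μ s) (highPt μ s) := fun x hx =>
      ⟨lt_of_lt_of_le ha_lt_t0 hx.1, lt_of_le_of_lt hx.2 ht₁_lt_b⟩
    have hfs_contOn : ContinuousOn fs (Icc (quantS μ s (ε/2)) t₁) := fun x hx =>
      ((hfs' x (hIcc_sub hx)).continuousAt).continuousWithinAt
    obtain ⟨tm, htm, hmin⟩ := isCompact_Icc.exists_isMinOn
      ⟨quantS μ s (ε/2), le_refl _, le_max_right _ _⟩ hfs_contOn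
    refine ⟨min (fs tm) (A/2), lt_min (hfs_pos tm (hIcc_sub htm)) (by linarith), ?_⟩
    intro t h1 h2
    rcases le_or_gt t t₁ with h | h
    · exact le_trans (min_le_left _ _) (hmin ⟨h1, h⟩)
    · exact le_trans (min_le_right _ _)
        (le_of_lt (hIoo ⟨lt_of_le_of_lt (le_max_left _ _) h, h2⟩))
  have hgrow : ∀ x y, quantS μ s (ε/2) ≤ x → x ≤ y → y ≤ highPt μ s →
      c * (y - x) ≤ cdfS μ s y - cdfS μ s x := fun x y h1 h2 h3 =>
    EmpQuantAux3.F_growth hFcont hfs hc_lb ha_lt_t0 h1 h2 h3 hc_pos.le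
  have ht0_le_Q : ∀ α : ℝ, ε/2 ≤ α → α ≤ 1 → quantS μ s (ε/2) ≤ quantS μ s α :=
    fun α h1 h2 => hQ_mono _ _ hεhalf h1 h2
  have hQlip : ∀ α β : ℝ, ε/2 ≤ α → α ≤ β → β ≤ 1 →
      quantS μ s β - quantS μ s α ≤ (β - α) / c := by
    intro α β h1 h2 h3
    have hαpos : 0 < α := by linarith
    have h5 := hgrow _ _ (ht0_le_Q α h1 (le_trans h2 h3)) (hQ_mono α β hαpos h2 h3)
      (hQ_le_b β (by linarith) h3)
    rw [hQ_eq α hαpos (le_trans h2 h3), hQ_eq β (by linarith) h3] at h5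
    rw [le_div_iff₀ hc_pos]
    nlinarith
  -- law transfer
  have hp_law : ∀ (t : ℝ) (i : ℕ), (ℙ {ω | s (X i ω) ≤ t}).toReal = cdfS μ s t := by
    intro t i
    have hSm : MeasurableSet {x : Fin d → ℝ | s x ≤ t} :=
      measurableSet_le hs_meas measurable_const
    have hpre : {ω | s (X i ω) ≤ t} = X i ⁻¹' {x | s x ≤ t} := rfl
    rw [hpre, ← Measure.map_apply (hX_meas i) hSm, hX_law i]
    rfl
  have hFb_one : cdfS μ s (highPt μ s) = 1 := by
    rw [hhigh_eq]
    exact EmpQuantAux2.F_highPt_eq_one hFcont hFmono hFB hFneg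
  have hbnd_ae : ∀ᵐ ω ∂ℙ, ∀ i : ℕ, s (X i ω) ≤ highPt μ s := by
    rw [ae_all_iff]
    intro i
    have hSm : MeasurableSet {ω | s (X i ω) ≤ highPt μ s} :=
      (hX_meas i) (measurableSet_le hs_meas measurable_const)
    have h1 : ℙ {ω | s (X i ω) ≤ highPt μ s} = 1 :=
      (ENNReal.toReal_eq_one_iff _).mp (by rw [hp_law]; exact hFb_one)
    rw [ae_iff]
    have hcompl : {ω | ¬ s (X i ω) ≤ highPt μ s} = {ω | s (X i ω) ≤ highPt μ s}ᶜ := rfl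
    rw [hcompl, prob_compl_eq_zero_iff hSm]
    exact h1
  -- bad events
  set Ebad : ℕ → Set Ω := fun n =>
    if 36 ≤ n then
      ⋃ j ∈ Finset.range (n+1),
        ({ω | EmpQuantAux4.etaN n ≤
            cdfS μ s (quantS μ s (EmpQuantAux4.gridPt ε n j) + EmpQuantAux4.etaN n / c)
              - cdfHat s X n ω
                  (quantS μ s (EmpQuantAux4.gridPt ε n j) + EmpQuantAux4.etaN n / c)}
          ∪ {ω | EmpQuantAux4.etaN n ≤
            cdfHat s X n ω
                (quantS μ s (EmpQuantAux4.gridPt ε n j) - EmpQuantAux4.etaN n / c)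
              - cdfS μ s (quantS μ s (EmpQuantAux4.gridPt ε n j) - EmpQuantAux4.etaN n / c)})
    else ∅ with hEdef
  have hEbad_le : ∀ n : ℕ, ℙ (Ebad n) ≤ ENNReal.ofReal (4 / (n:ℝ)^2) := by
    intro n
    by_cases hn : 36 ≤ n
    · have hn1 : 1 ≤ n := le_trans (by norm_num) hn
      have hn0 : (0:ℝ) < n := by exact_mod_cast hn1
      have hηp : 0 < EmpQuantAux4.etaN n := EmpQuantAux4.etaN_pos (le_trans (by norm_num) hn)
      have hη2 : EmpQuantAux4.etaN n ≤ 2 := EmpQuantAux4.etaN_le_two hn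
      have hexp := EmpQuantAux4.exp_etaN hn1
      simp only [hEdef]
      rw [if_pos hn]
      refine le_trans (measure_biUnion_finset_le _ _) ?_
      have hterm : ∀ j ∈ Finset.range (n+1),
          ℙ ({ω | EmpQuantAux4.etaN n ≤
              cdfS μ s (quantS μ s (EmpQuantAux4.gridPt ε n j) + EmpQuantAux4.etaN n / c)
                - cdfHat s X n ω
                    (quantS μ s (EmpQuantAux4.gridPt ε n j) + EmpQuantAux4.etaN n / c)}
            ∪ {ω | EmpQuantAux4.etaN n ≤
              cdfHat s X n ω
                  (quantS μ s (EmpQuantAux4.gridPt ε n j) - EmpQuantAux4.etaN n / c)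
                - cdfS μ s (quantS μ s (EmpQuantAux4.gridPt ε n j)
                    - EmpQuantAux4.etaN n / c)})
            ≤ ENNReal.ofReal (2 / (n:ℝ)^3) := by
        intro j _
        have h1 := EmpQuantAux3.chernoff_cdf_lower ℙ X hX_meas hX_indep s hs_meas
          (quantS μ s (EmpQuantAux4.gridPt ε n j) + EmpQuantAux4.etaN n / c)
          (fun i => hp_law _ i) hn1 hηp hη2
        have h2 := EmpQuantAux3.chernoff_cdf_upper ℙ X hX_meas hX_indep s hs_meas
          (quantS μ s (EmpQuantAux4.gridPt ε n j) - EmpQuantAux4.etaN n / c)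
          (fun i => hp_law _ i) hn1 hηp hη2
        refine le_trans (measure_union_le _ _)
          (le_trans (add_le_add h1 h2) (le_of_eq ?_))
        rw [← ENNReal.ofReal_add (Real.exp_pos _).le (Real.exp_pos _).le, hexp]
        congr 1
        ring
      refine le_trans (Finset.sum_le_sum hterm) ?_
      rw [Finset.sum_const, Finset.card_range, nsmul_eq_mul,
        ← ENNReal.ofReal_natCast (n+1), ← ENNReal.ofReal_mul (by positivity)]
      apply ENNReal.ofReal_le_ofReal
      have hcast : ((n+1 : ℕ):ℝ) ≤ 2*(n:ℝ) := by
        push_cast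
        have : (1:ℝ) ≤ n := by exact_mod_cast hn1
        linarith
      calc ((n+1:ℕ):ℝ) * (2/(n:ℝ)^3) ≤ (2*(n:ℝ)) * (2/(n:ℝ)^3) :=
            mul_le_mul_of_nonneg_right hcast (by positivity)
        _ = 4/(n:ℝ)^2 := by field_simp; ring
    · simp only [hEdef]
      rw [if_neg hn]
      simp
  have hsum_ne : (∑' n, ℙ (Ebad n)) ≠ ∞ := by
    have hgnn : ∀ n : ℕ, 0 ≤ (4:ℝ)/(n:ℝ)^2 := fun n => by positivity
    have htop : (∑' n : ℕ, ENNReal.ofReal ((4:ℝ)/(n:ℝ)^2)) ≠ ∞ := by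
      rw [← ENNReal.ofReal_tsum_of_nonneg hgnn EmpQuantAux4.summable_four_div_sq]
      exact ENNReal.ofReal_ne_top
    exact ne_top_of_le_ne_top htop (ENNReal.tsum_le_tsum hEbad_le)
  refine ⟨48 / c^2, by positivity, ?_⟩
  have hev_ηε : ∀ᶠ n : ℕ in atTop, EmpQuantAux4.etaN n < ε/2 :=
    EmpQuantAux4.etaN_tendsto.eventually_lt_const (by linarith)
  filter_upwards [MeasureTheory.ae_eventually_notMem hsum_ne, hbnd_ae] with ω hωE hωbnd
  filter_upwards [hωE, hev_ηε, EmpQuantAux4.one_div_le_etaN, eventually_ge_atTop 36]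
    with n hnE hnηε hnδ hn36
  intro α hα
  obtain ⟨hαε, hα1⟩ := hα
  have hn1 : 1 ≤ n := le_trans (by norm_num) hn36
  have hn0 : (0:ℝ) < n := by exact_mod_cast hn1
  have hηp : 0 < EmpQuantAux4.etaN n := EmpQuantAux4.etaN_pos (le_trans (by norm_num) hn36)
  -- empirical cdf facts
  have hFh_mono : Monotone (cdfHat s X n ω) := by
    intro x y hxy
    have hsum : (∑ i ∈ Finset.range n, if s (X i ω) ≤ x then (1:ℝ) else 0)
        ≤ ∑ i ∈ Finset.range n, if s (X i ω) ≤ y then (1:ℝ) else 0 := by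
      refine Finset.sum_le_sum fun i _ => ?_
      by_cases h : s (X i ω) ≤ x
      · rw [if_pos h, if_pos (le_trans h hxy)]
      · rw [if_neg h]
        by_cases h2 : s (X i ω) ≤ y
        · rw [if_pos h2]; norm_num
        · rw [if_neg h2]
    show (∑ i ∈ Finset.range n, if s (X i ω) ≤ x then (1:ℝ) else 0) / n
        ≤ (∑ i ∈ Finset.range n, if s (X i ω) ≤ y then (1:ℝ) else 0) / n
    gcongr
  have hFh_neg : ∀ t : ℝ, t < 0 → cdfHat s X n ω t = 0 := by
    intro t ht
    show (∑ i ∈ Finset.range n, if s (X i ω) ≤ t then (1:ℝ) else 0) / n = 0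
    rw [Finset.sum_eq_zero, zero_div]
    intro i _
    rw [if_neg (not_le.mpr (lt_of_lt_of_le ht (hs_nonneg (X i ω))))]
  have hFh_b : cdfHat s X n ω (highPt μ s) = 1 := by
    show (∑ i ∈ Finset.range n, if s (X i ω) ≤ highPt μ s then (1:ℝ) else 0) / n = 1
    rw [Finset.sum_congr rfl fun i _ => if_pos (hωbnd i), Finset.sum_const,
      Finset.card_range, nsmul_eq_mul, mul_one, div_self (ne_of_gt hn0)]
  -- extract good events
  simp only [hEdef] at hnE
  rw [if_pos hn36] at hnE
  simp only [Set.mem_iUnion, Set.mem_union, mem_setOf_eq, Finset.mem_range, not_exists,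
    not_or, not_le] at hnE
  have hcδ : c * (EmpQuantAux4.etaN n / c) = EmpQuantAux4.etaN n := by field_simp
  -- key deviation bound at grid points
  have key : ∀ j : ℕ, j < n + 1 →
      quantS μ s (EmpQuantAux4.gridPt ε n j) - EmpQuantAux4.etaN n / c
        ≤ quantHat s X n ω (EmpQuantAux4.gridPt ε n j)
      ∧ quantHat s X n ω (EmpQuantAux4.gridPt ε n j)
        ≤ quantS μ s (EmpQuantAux4.gridPt ε n j) + EmpQuantAux4.etaN n / c := by
    intro j hj
    obtain ⟨hdev1, hdev2⟩ := hnE j hj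
    set β := EmpQuantAux4.gridPt ε n j with hβdef
    have hβε : ε ≤ β := EmpQuantAux4.gridPt_ge hε1
    have hβ1 : β ≤ 1 := EmpQuantAux4.gridPt_le_one hε1
    have hβpos : 0 < β := lt_of_lt_of_le hεpos hβε
    have hδpos : 0 < EmpQuantAux4.etaN n / c := by positivity
    constructor
    · -- lower bound on empirical quantile
      refine EmpQuantAux2.le_quant
        ⟨highPt μ s, show β ≤ cdfHat s X n ω (highPt μ s) from by rw [hFh_b]; exact hβ1⟩ ?_
      intro t ht
      by_contra hcon
      push_neg at hcon
      have hu : cdfHat s X n ω t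
          ≤ cdfHat s X n ω (quantS μ s β - EmpQuantAux4.etaN n / c) := hFh_mono hcon.le
      have hFhu_lt : cdfHat s X n ω (quantS μ s β - EmpQuantAux4.etaN n / c) < β := by
        rcases le_or_gt (quantS μ s β - EmpQuantAux4.etaN n / c) (quantS μ s (ε/2))
          with hcase | hcase
        · have hFu : cdfS μ s (quantS μ s β - EmpQuantAux4.etaN n / c) ≤ ε/2 := by
            have h6 := hFmono hcase
            rw [hQ_eq (ε/2) hεhalf hεhalf1] at h6
            exact h6
          linarith
        · have h6 := hgrow _ _ hcase.le (by linarith) (hQ_le_b β hβpos hβ1)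
          rw [hQ_eq β hβpos hβ1,
            show quantS μ s β - (quantS μ s β - EmpQuantAux4.etaN n / c)
              = EmpQuantAux4.etaN n / c from by ring, hcδ] at h6
          linarith
      linarith
    · -- upper bound on empirical quantile
      rcases le_or_gt (highPt μ s) (quantS μ s β + EmpQuantAux4.etaN n / c) with hcase | hcase
      · refine le_trans ?_ hcase
        exact EmpQuantAux2.quant_le hFh_neg hβpos (by rw [hFh_b]; exact hβ1)
      · have h6 := hgrow _ _ (ht0_le_Q β (by linarith) hβ1) (by linarith) hcase.le
        rw [hQ_eq β hβpos hβ1,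
          show quantS μ s β + EmpQuantAux4.etaN n / c - quantS μ s β
            = EmpQuantAux4.etaN n / c from by ring, hcδ] at h6
        have hβle : β ≤ cdfHat s X n ω (quantS μ s β + EmpQuantAux4.etaN n / c) := by linarith
        exact EmpQuantAux2.quant_le hFh_neg hβpos hβle
  -- grid cell containing α
  obtain ⟨j, hjn, hβ1α, hαβ2⟩ := EmpQuantAux4.gridPt_floor hεpos hn1 hαε hα1
  obtain ⟨hlow1, hup1⟩ := key j (by omega)
  obtain ⟨hlow2, hup2⟩ := key (j+1) (by omega)
  have hg1ε : ε ≤ EmpQuantAux4.gridPt ε n j := EmpQuantAux4.gridPt_ge hε1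
  have hg2le1 : EmpQuantAux4.gridPt ε n (j+1) ≤ 1 := EmpQuantAux4.gridPt_le_one hε1
  have hqh_mono1 : quantHat s X n ω (EmpQuantAux4.gridPt ε n j) ≤ quantHat s X n ω α :=
    EmpQuantAux2.quant_mono hFh_neg (by linarith)
      ⟨highPt μ s, show α ≤ cdfHat s X n ω (highPt μ s) from by rw [hFh_b]; exact hα1⟩ hβ1α
  have hqh_mono2 : quantHat s X n ω α ≤ quantHat s X n ω (EmpQuantAux4.gridPt ε n (j+1)) :=
    EmpQuantAux2.quant_mono hFh_neg (by linarith)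
      ⟨highPt μ s, show EmpQuantAux4.gridPt ε n (j+1) ≤ cdfHat s X n ω (highPt μ s) from by
        rw [hFh_b]; exact hg2le1⟩ hαβ2
  have hstep : EmpQuantAux4.gridPt ε n (j+1) ≤ EmpQuantAux4.gridPt ε n j + 1/(n:ℝ) :=
    EmpQuantAux4.gridPt_step (by omega)
  have hlip1 : quantS μ s α - quantS μ s (EmpQuantAux4.gridPt ε n j) ≤ (1/(n:ℝ))/c := by
    have h7 := hQlip (EmpQuantAux4.gridPt ε n j) α (by linarith) hβ1α hα1
    have hstep' : α - EmpQuantAux4.gridPt ε n j ≤ 1/(n:ℝ) := by linarith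
    refine le_trans h7 ?_
    exact (div_le_div_iff_of_pos_right hc_pos).mpr hstep'
  have hlip2 : quantS μ s (EmpQuantAux4.gridPt ε n (j+1)) - quantS μ s α ≤ (1/(n:ℝ))/c := by
    have h7 := hQlip α (EmpQuantAux4.gridPt ε n (j+1)) (by linarith) hαβ2 hg2le1
    have hstep' : EmpQuantAux4.gridPt ε n (j+1) - α ≤ 1/(n:ℝ) := by linarith
    refine le_trans h7 ?_
    exact (div_le_div_iff_of_pos_right hc_pos).mpr hstep'
  have hδn : (1/(n:ℝ))/c ≤ EmpQuantAux4.etaN n / c := (div_le_div_iff_of_pos_right hc_pos).mpr hnδ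
  have habs : |quantHat s X n ω α - quantS μ s α| ≤ 2 * (EmpQuantAux4.etaN n / c) := by
    rw [abs_le]
    constructor
    · linarith
    · linarith
  have hsq : |quantHat s X n ω α - quantS μ s α|^2 ≤ (2 * (EmpQuantAux4.etaN n / c))^2 :=
    pow_le_pow_left₀ (abs_nonneg _) habs 2
  refine le_trans hsq (le_of_eq ?_)
  rw [show (2 * (EmpQuantAux4.etaN n / c))^2 = 4 * (EmpQuantAux4.etaN n)^2 / c^2 from by ring,
    EmpQuantAux4.etaN_sq hn1]
  ring
end
end
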